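/- arXiv:2404.09347 — 7 statements merged into one kernel-verified Lean document; each statement's English description precedes it below -/
import Mathlib

section
/- For any matroid M = (E, r) on a finite ground set E and any real number q ∉ {0, 1}, the characteristic polynomial of the dual matroid satisfies χ_{M*}(q) · (1/(1 - q))^{|E|} = Σ_{A ⊆ E} (-1)^{|E|-|A|} · (χ_{M|A}(q) / q^{r(A)}) · (1/(1 - q^{-1}))^{|A|}, where M|A denotes the restriction of M to A. -/
open Finset

/-- A matroid on a finite ground set `E`, given by its rank function. -/
structure FinMatroid (E : Type*) [Fintype E] [DecidableEq E] where
  rk : Finset E → ℕ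
  rk_le_card : ∀ A, rk A ≤ A.card
  rk_mono : ∀ ⦃A B : Finset E⦄, A ⊆ B → rk A ≤ rk B
  rk_submod : ∀ A B, rk (A ∪ B) + rk (A ∩ B) ≤ rk A + rk B

namespace FinMatroid

variable {E : Type*} [Fintype E] [DecidableEq E] (M : FinMatroid E)

/-- The rank function of the dual matroid: `r*(A) = r(E \ A) + |A| - r(E)`. -/
def dualRk (A : Finset E) : ℕ := M.rk Aᶜ + A.card - M.rk univ

/-- The characteristic polynomial `χ_M(x) = ∑_{A ⊆ E} (-1)^{|A|} x^{r(E) - r(A)}`. -/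
def charPoly (x : ℝ) : ℝ :=
  ∑ A : Finset E, (-1 : ℝ) ^ A.card * x ^ (M.rk univ - M.rk A)

/-- The characteristic polynomial of the dual matroid `M*`. -/
def dualCharPoly (x : ℝ) : ℝ :=
  ∑ A : Finset E, (-1 : ℝ) ^ A.card * x ^ (M.dualRk univ - M.dualRk A)

/-- The characteristic polynomial of the restriction `M|A`. -/
def restrictCharPoly (A : Finset E) (x : ℝ) : ℝ :=
  ∑ B ∈ A.powerset, (-1 : ℝ) ^ B.card * x ^ (M.rk A - M.rk B)

/-- The characteristic polynomial of the contraction `M/A`: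
its ground set is `Aᶜ`, its rank function is `B ↦ r(A ∪ B) - r(A)`, so the
exponent `r_{M/A}(Aᶜ) - r_{M/A}(B)` equals `r(E) - r(A ∪ B)`. -/
def contractCharPoly (A : Finset E) (x : ℝ) : ℝ :=
  ∑ B ∈ Aᶜ.powerset, (-1 : ℝ) ^ B.card * x ^ (M.rk univ - M.rk (A ∪ B))

/-- The Tutte polynomial `T_M(x,y) = ∑_{A ⊆ E} (x-1)^{r(E)-r(A)} (y-1)^{|A|-r(A)}`. -/
def tutte (x y : ℝ) : ℝ :=
  ∑ A : Finset E, (x - 1) ^ (M.rk univ - M.rk A) * (y - 1) ^ (A.card - M.rk A)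

/-- The Tutte polynomial of the dual matroid `M*`. -/
def dualTutte (x y : ℝ) : ℝ :=
  ∑ A : Finset E, (x - 1) ^ (M.dualRk univ - M.dualRk A) * (y - 1) ^ (A.card - M.dualRk A)

/-- The Tutte polynomial of the restriction `M|A`. -/
def restrictTutte (A : Finset E) (x y : ℝ) : ℝ :=
  ∑ B ∈ A.powerset, (x - 1) ^ (M.rk A - M.rk B) * (y - 1) ^ (B.card - M.rk B)

/-- The Tutte polynomial of the contraction `M/A` (ground set `Aᶜ`,
rank function `B ↦ r(A ∪ B) - r(A)`). -/
def contractTutte (A : Finset E) (x y : ℝ) : ℝ :=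
  ∑ B ∈ Aᶜ.powerset,
    (x - 1) ^ ((M.rk univ - M.rk A) - (M.rk (A ∪ B) - M.rk A)) *
      (y - 1) ^ (B.card - (M.rk (A ∪ B) - M.rk A))

end FinMatroid


section MatAux
variable {E : Type*} [Fintype E] [DecidableEq E]

omit [Fintype E] in
lemma aux_sum_pow_card (s : Finset E) (x : ℝ) :
    ∑ t ∈ s.powerset, x ^ t.card = (x + 1) ^ s.card := by
  simpa [Finset.prod_const] using (Finset.prod_add (fun _ : E => x) 1 s).symm

lemma aux_swap (f : Finset E → Finset E → ℝ) :
    ∑ A : Finset E, ∑ B ∈ A.powerset, f A B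
      = ∑ B : Finset E, ∑ A ∈ univ.filter (fun A => B ⊆ A), f A B := by
  have h1 : ∀ A : Finset E, A.powerset = univ.filter (fun B => B ⊆ A) := by
    intro A; ext B; simp
  calc ∑ A : Finset E, ∑ B ∈ A.powerset, f A B
      = ∑ A : Finset E, ∑ B : Finset E, if B ⊆ A then f A B else 0 := by
        refine Finset.sum_congr rfl fun A _ => ?_
        rw [h1 A, Finset.sum_filter]
    _ = ∑ B : Finset E, ∑ A : Finset E, if B ⊆ A then f A B else 0 := Finset.sum_comm
    _ = _ := by
        refine Finset.sum_congr rfl fun B _ => ?_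
        rw [Finset.sum_filter]

lemma aux_inner (B : Finset E) (g : ℕ → ℝ) :
    ∑ A ∈ univ.filter (fun A => B ⊆ A), g A.card
      = ∑ C ∈ Bᶜ.powerset, g (B.card + C.card) := by
  refine Finset.sum_nbij' (fun A => A \ B) (fun C => B ∪ C) ?_ ?_ ?_ ?_ ?_
  · intro A hA
    simp only [Finset.mem_powerset]
    intro x hx
    simp only [Finset.mem_sdiff] at hx
    simpa using hx.2
  · intro C hC; simp
  · intro A hA; simp only [mem_filter, mem_univ, true_and] at hA
    exact Finset.union_sdiff_of_subset hA
  · intro C hC; simp only [Finset.mem_powerset] at hC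
    refine Finset.union_sdiff_cancel_left ?_
    exact disjoint_compl_right.mono_right hC
  · intro A hA; simp only [mem_filter, mem_univ, true_and] at hA
    congr 1
    have h1 := Finset.card_sdiff_of_subset hA
    have h2 := Finset.card_le_card hA
    omega

end MatAux

/-- Matroid form of the Matiyasevich formula:
`χ_{M*}(q) ζ_q(-1)^{|E|} = ∑_{A ⊆ E} (-1)^{|E|-|A|} (χ_{M|A}(q)/q^{r(A)}) ζ_q(1)^{|A|}`,
where `ζ_q(-1) = 1/(1-q)` and `ζ_q(1) = 1/(1-q⁻¹)`. -/
theorem matiyasevich_restriction {E : Type*} [Fintype E] [DecidableEq E]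
    (M : FinMatroid E) (q : ℝ) (hq0 : q ≠ 0) (hq1 : q ≠ 1) :
    M.dualCharPoly q * (1 / (1 - q)) ^ Fintype.card E =
      ∑ A : Finset E, (-1 : ℝ) ^ (Fintype.card E - A.card) *
        (M.restrictCharPoly A q / q ^ M.rk A) * (1 / (1 - q⁻¹)) ^ A.card := by
  classical
  set n := Fintype.card E with hn
  have hq1' : (1:ℝ) - q ≠ 0 := sub_ne_zero.mpr fun h => hq1 h.symm
  have hq1'' : q - 1 ≠ 0 := sub_ne_zero.mpr hq1
  have hqi : (1:ℝ) - q⁻¹ ≠ 0 := by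
    rw [sub_ne_zero]
    intro h
    exact hq1 (inv_eq_one.mp h.symm)
  have h0 : M.rk ∅ = 0 := Nat.le_zero.mp (by simpa using M.rk_le_card ∅)
  have hu : M.rk univ ≤ n := by simpa using M.rk_le_card univ
  have hsub : ∀ A : Finset E, M.rk univ ≤ M.rk A + M.rk Aᶜ := by
    intro A
    have := M.rk_submod A Aᶜ
    simpa [Finset.union_compl, Finset.inter_compl, h0] using this
  -- Step 1: rewrite the dual characteristic polynomial
  have hdual : M.dualCharPoly q
      = ∑ B : Finset E, (-1:ℝ) ^ (n - B.card) * q ^ (B.card - M.rk B) := by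
    unfold FinMatroid.dualCharPoly
    refine Fintype.sum_bijective compl (Function.Involutive.bijective fun s => compl_compl s)
      _ _ fun A => ?_
    have hA : M.rk A ≤ A.card := M.rk_le_card A
    have hAc : M.rk Aᶜ ≤ Aᶜ.card := M.rk_le_card Aᶜ
    have hcc : Aᶜ.card = n - A.card := by simp [Finset.card_compl, hn]
    have hcard : A.card ≤ n := by simpa using Finset.card_le_univ A
    have hs := hsub A
    have e1 : n - Aᶜ.card = A.card := by omega
    have e2 : M.dualRk univ - M.dualRk A = Aᶜ.card - M.rk Aᶜ := by
      unfold FinMatroid.dualRk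
      rw [Finset.compl_univ, h0, Finset.card_univ]
      omega
    rw [e1, e2]
  -- Step 2: rewrite each summand on the RHS as a sum over subsets
  have hterm : ∀ A : Finset E,
      (-1:ℝ) ^ (n - A.card) * (M.restrictCharPoly A q / q ^ M.rk A) * (1/(1-q⁻¹)) ^ A.card
        = ∑ B ∈ A.powerset,
            (-1:ℝ) ^ (n - A.card) * ((1-q⁻¹)⁻¹) ^ A.card
              * ((-1:ℝ) ^ B.card * (q ^ M.rk B)⁻¹) := by
    intro A
    have hR : M.restrictCharPoly A q
        = q ^ M.rk A * ∑ B ∈ A.powerset, (-1:ℝ) ^ B.card * (q ^ M.rk B)⁻¹ := by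
      unfold FinMatroid.restrictCharPoly
      rw [Finset.mul_sum]
      refine Finset.sum_congr rfl fun B hB => ?_
      rw [pow_sub₀ q hq0 (M.rk_mono (Finset.mem_powerset.mp hB))]
      ring
    rw [hR, mul_div_cancel_left₀ _ (pow_ne_zero _ hq0), one_div, Finset.mul_sum,
      Finset.sum_mul]
    exact Finset.sum_congr rfl fun B _ => by ring
  -- Step 3: evaluate the inner sum
  have hinner : ∀ B : Finset E,
      ∑ A ∈ univ.filter (fun A => B ⊆ A),
          (-1:ℝ) ^ (n - A.card) * ((1-q⁻¹)⁻¹) ^ A.card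
        = (-1:ℝ) ^ n * q ^ B.card * ((1-q)⁻¹) ^ n := by
    intro B
    have hBn : B.card ≤ n := by simpa using Finset.card_le_univ B
    have step1 : ∑ A ∈ univ.filter (fun A => B ⊆ A),
        (-1:ℝ) ^ (n - A.card) * ((1-q⁻¹)⁻¹) ^ A.card
        = ∑ A ∈ univ.filter (fun A => B ⊆ A),
            (-1:ℝ) ^ n * (-(1-q⁻¹)⁻¹) ^ A.card := by
      refine Finset.sum_congr rfl fun A _ => ?_
      have hAn : A.card ≤ n := by simpa using Finset.card_le_univ A
      rw [pow_sub₀ (-1:ℝ) (by norm_num) hAn, neg_pow]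
      rw [← inv_pow, inv_neg, inv_one]
      ring
    rw [step1, aux_inner B (fun k => (-1:ℝ) ^ n * (-(1-q⁻¹)⁻¹) ^ k)]
    have step2 : ∑ C ∈ Bᶜ.powerset, (-1:ℝ) ^ n * (-(1-q⁻¹)⁻¹) ^ (B.card + C.card)
        = (-1:ℝ) ^ n * (-(1-q⁻¹)⁻¹) ^ B.card
            * ∑ C ∈ Bᶜ.powerset, (-(1-q⁻¹)⁻¹) ^ C.card := by
      rw [Finset.mul_sum]
      exact Finset.sum_congr rfl fun C _ => by rw [pow_add]; ring
    rw [step2, aux_sum_pow_card]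
    have hcc : Bᶜ.card = n - B.card := by simp [Finset.card_compl, hn]
    rw [hcc]
    have hs : -(1-q⁻¹)⁻¹ = q * (1-q)⁻¹ := by
      field_simp
      ring
    have hs1 : -(1-q⁻¹)⁻¹ + 1 = (1-q)⁻¹ := by
      field_simp
      ring
    rw [hs1, hs, mul_pow]
    have : ((1-q:ℝ)⁻¹) ^ B.card * ((1-q)⁻¹) ^ (n - B.card) = ((1-q)⁻¹) ^ n := by
      rw [← pow_add]
      congr 1
      omega
    rw [mul_assoc ((-1:ℝ)^n), mul_assoc, this]
    ring
  -- Combine everything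
  calc M.dualCharPoly q * (1 / (1 - q)) ^ n
      = ∑ B : Finset E,
          (-1:ℝ) ^ (n - B.card) * q ^ (B.card - M.rk B) * ((1-q)⁻¹) ^ n := by
        rw [hdual, Finset.sum_mul, one_div]
    _ = ∑ B : Finset E,
          ((-1:ℝ) ^ n * q ^ B.card * ((1-q)⁻¹) ^ n)
            * ((-1:ℝ) ^ B.card * (q ^ M.rk B)⁻¹) := by
        refine Finset.sum_congr rfl fun B _ => ?_
        have hBn : B.card ≤ n := by simpa using Finset.card_le_univ B
        have hrB : M.rk B ≤ B.card := M.rk_le_card B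
        rw [pow_sub₀ (-1:ℝ) (by norm_num) hBn, pow_sub₀ q hq0 hrB]
        rw [← inv_pow, inv_neg, inv_one]
        ring
    _ = ∑ B : Finset E,
          (∑ A ∈ univ.filter (fun A => B ⊆ A),
            (-1:ℝ) ^ (n - A.card) * ((1-q⁻¹)⁻¹) ^ A.card)
            * ((-1:ℝ) ^ B.card * (q ^ M.rk B)⁻¹) := by
        refine Finset.sum_congr rfl fun B _ => ?_
        rw [hinner B]
    _ = ∑ B : Finset E, ∑ A ∈ univ.filter (fun A => B ⊆ A),
          (-1:ℝ) ^ (n - A.card) * ((1-q⁻¹)⁻¹) ^ A.card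
            * ((-1:ℝ) ^ B.card * (q ^ M.rk B)⁻¹) := by
        refine Finset.sum_congr rfl fun B _ => ?_
        rw [Finset.sum_mul]
    _ = ∑ A : Finset E, ∑ B ∈ A.powerset,
          (-1:ℝ) ^ (n - A.card) * ((1-q⁻¹)⁻¹) ^ A.card
            * ((-1:ℝ) ^ B.card * (q ^ M.rk B)⁻¹) := by
        rw [aux_swap (fun A B => (-1:ℝ) ^ (n - A.card) * ((1-q⁻¹)⁻¹) ^ A.card
            * ((-1:ℝ) ^ B.card * (q ^ M.rk B)⁻¹))]
    _ = ∑ A : Finset E, (-1:ℝ) ^ (n - A.card)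
          * (M.restrictCharPoly A q / q ^ M.rk A) * (1/(1-q⁻¹)) ^ A.card := by
        refine Finset.sum_congr rfl fun A _ => (hterm A).symm
end

section
/- For any matroid M = (E, r) on a finite ground set E and any real q ∉ {0, 1}, (χ_{M*}(q) / q^{r*(E)}) · (1/(1 − q^{-1}))^{|E|} = Σ_{A ⊆ E} (1/(1 − q))^{|E|−|A|} · χ_{M/A}(q), where M/A denotes the contraction of M by A and r*(E) = |E| − r(E). -/
open Finset

section Aux

variable {E : Type*} [Fintype E] [DecidableEq E] (M : FinMatroid E)

lemma FinMatroid.rk_empty' : M.rk ∅ = 0 :=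
  Nat.le_zero.mp (by simpa using M.rk_le_card ∅)

lemma FinMatroid.rk_le_rk_univ' (A : Finset E) : M.rk A ≤ M.rk univ :=
  M.rk_mono (subset_univ A)

lemma FinMatroid.rk_univ_le' (A : Finset E) : M.rk univ ≤ M.rk Aᶜ + A.card := by
  have h := M.rk_submod A Aᶜ
  have h1 : A ∪ Aᶜ = univ := by simp [Finset.union_compl]
  have h2 : A ∩ Aᶜ = ∅ := by simp [Finset.inter_compl]
  rw [h1, h2, M.rk_empty'] at h
  have := M.rk_le_card A
  omega

end Aux

/-- Matroid form of the Matiyasevich formula, contraction version: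
`(χ_{M*}(q)/q^{r*(E)}) ζ_q(1)^{|E|} = ∑_{A ⊆ E} ζ_q(-1)^{|E|-|A|} χ_{M/A}(q)`,
where `r*(E) = |E| - r(E)`, `ζ_q(-1) = 1/(1-q)` and `ζ_q(1) = 1/(1-q⁻¹)`. -/
theorem matiyasevich_contraction {E : Type*} [Fintype E] [DecidableEq E]
    (M : FinMatroid E) (q : ℝ) (hq0 : q ≠ 0) (hq1 : q ≠ 1) :
    M.dualCharPoly q / q ^ (Fintype.card E - M.rk Finset.univ) *
        (1 / (1 - q⁻¹)) ^ Fintype.card E =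
      ∑ A : Finset E, (1 / (1 - q)) ^ (Fintype.card E - A.card) *
        M.contractCharPoly A q := by
  classical
  set n := Fintype.card E with hn
  set r := M.rk Finset.univ with hr
  have h1q : (1:ℝ) - q ≠ 0 := fun h => hq1 (by linarith)
  have hq1' : q - 1 ≠ 0 := fun h => hq1 (by linarith)
  have hzeta : 1 / (1 - q⁻¹) = q / (q - 1) := by
    have h : (1:ℝ) - q⁻¹ = (q - 1) / q := by field_simp
    rw [h, one_div_div]
  have hcardle : ∀ A : Finset E, A.card ≤ n := fun A => Finset.card_le_univ A
  have hrn : r ≤ n := le_trans (M.rk_le_card _) (by simp [hn])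
  set S : ℝ := ∑ A : Finset E, (-1:ℝ) ^ A.card * q ^ (r - M.rk A + A.card) with hS
  -- LHS
  have hdualchar : M.dualCharPoly q
      = ∑ A : Finset E, (-1:ℝ) ^ (n - A.card) * q ^ (A.card - M.rk A) := by
    unfold FinMatroid.dualCharPoly
    apply Fintype.sum_bijective compl (Function.Involutive.bijective compl_involutive)
    intro A
    have hAc : Aᶜ.card = n - A.card := by simp [Finset.card_compl, hn]
    have e1 : n - Aᶜ.card = A.card := by have := hcardle A; omega
    have e2 : Aᶜ.card - M.rk Aᶜ = M.dualRk univ - M.dualRk A := by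
      unfold FinMatroid.dualRk
      have h1 : M.rk univᶜ = 0 := by simpa using M.rk_empty'
      have h2 : r ≤ M.rk Aᶜ + A.card := M.rk_univ_le' A
      have h3 : M.rk Aᶜ ≤ Aᶜ.card := M.rk_le_card Aᶜ
      have h4 : (univ : Finset E).card = n := by simp [hn]
      have := hcardle A
      rw [h1, h4, ← hr]
      omega
    rw [e1, e2]
  have hLHS : M.dualCharPoly q / q ^ (n - r) * (1 / (1 - q⁻¹)) ^ n
      = (1 / (1 - q)) ^ n * S := by
    rw [hdualchar, hzeta, hS, Finset.sum_div, Finset.sum_mul, Finset.mul_sum]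
    refine Finset.sum_congr rfl fun A _ => ?_
    have h1 : (q:ℝ) ^ (n - r) = q ^ n * (q ^ r)⁻¹ := pow_sub₀ q hq0 hrn
    have h2 : (q:ℝ) ^ (A.card - M.rk A) = q ^ A.card * (q ^ M.rk A)⁻¹ :=
      pow_sub₀ q hq0 (M.rk_le_card A)
    have h3 : (q:ℝ) ^ (r - M.rk A + A.card) = q ^ r * (q ^ M.rk A)⁻¹ * q ^ A.card := by
      rw [pow_add, pow_sub₀ q hq0 (M.rk_le_rk_univ' A)]
    have h4 : (-1:ℝ) ^ (n - A.card) = (-1) ^ n * (-1) ^ A.card := by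
      rw [pow_sub₀ (-1:ℝ) (by norm_num) (hcardle A)]
      congr 1
      rw [← inv_pow]
      norm_num
    have h5 : ((1:ℝ) / (1 - q)) ^ n = (-1:ℝ) ^ n * (1 / (q - 1)) ^ n := by
      rw [← mul_pow]
      congr 1
      field_simp
      ring
    have h6 : (q / (q - 1)) ^ n = q ^ n * (1 / (q - 1)) ^ n := by
      rw [div_eq_mul_one_div, mul_pow]
    rw [h2, h3, h4, h5, h6, h1]
    have hqr : (q:ℝ) ^ r ≠ 0 := pow_ne_zero _ hq0
    have hqn : (q:ℝ) ^ n ≠ 0 := pow_ne_zero _ hq0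
    have hqa : (q:ℝ) ^ M.rk A ≠ 0 := pow_ne_zero _ hq0
    field_simp
  -- RHS
  have hRHS : (∑ A : Finset E, (1 / (1 - q)) ^ (n - A.card) * M.contractCharPoly A q)
      = (1 / (1 - q)) ^ n * S := by
    have step1 : ∀ A : Finset E, (1 / (1 - q)) ^ (n - A.card) * M.contractCharPoly A q
        = ∑ B ∈ Aᶜ.powerset,
            (1 / (1 - q)) ^ (n - A.card) * ((-1:ℝ) ^ B.card * q ^ (r - M.rk (A ∪ B))) := by
      intro A
      unfold FinMatroid.contractCharPoly
      rw [Finset.mul_sum, ← hr]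
    rw [Finset.sum_congr rfl fun A _ => step1 A]
    rw [Finset.sum_sigma']
    have hbij : (∑ x ∈ (univ : Finset (Finset E)).sigma (fun A => Aᶜ.powerset),
          (1 / (1 - q)) ^ (n - x.1.card) * ((-1:ℝ) ^ x.2.card * q ^ (r - M.rk (x.1 ∪ x.2))))
        = ∑ x ∈ (univ : Finset (Finset E)).sigma (fun C => C.powerset),
          (1 / (1 - q)) ^ (n - x.2.card) * ((-1:ℝ) ^ (x.1.card - x.2.card) * q ^ (r - M.rk x.1)) := by
      refine Finset.sum_nbij' (fun x => ⟨x.1 ∪ x.2, x.1⟩) (fun x => ⟨x.2, x.1 \ x.2⟩)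
        ?_ ?_ ?_ ?_ ?_
      · rintro ⟨A, B⟩ _
        exact Finset.mem_sigma.mpr ⟨Finset.mem_univ _,
          Finset.mem_powerset.mpr Finset.subset_union_left⟩
      · rintro ⟨C, A⟩ hx
        simp only [Finset.mem_sigma, Finset.mem_univ, Finset.mem_powerset, true_and]
        intro a ha
        exact Finset.mem_compl.mpr (Finset.mem_sdiff.mp ha).2
      · rintro ⟨A, B⟩ hx
        simp only [Finset.mem_sigma, Finset.mem_univ, Finset.mem_powerset, true_and] at hx
        have hd : Disjoint A B := by
          rw [Finset.disjoint_right]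
          intro a haB haA
          exact (Finset.mem_compl.mp (hx haB)) haA
        dsimp only
        rw [Finset.union_sdiff_cancel_left hd]
      · rintro ⟨C, A⟩ hx
        simp only [Finset.mem_sigma, Finset.mem_univ, Finset.mem_powerset, true_and] at hx
        dsimp only
        rw [Finset.union_sdiff_of_subset hx]
      · rintro ⟨A, B⟩ hx
        simp only [Finset.mem_sigma, Finset.mem_univ, Finset.mem_powerset, true_and] at hx
        have hd : Disjoint A B := by
          rw [Finset.disjoint_right]
          intro a haB haA
          exact (Finset.mem_compl.mp (hx haB)) haA
        have hc : (A ∪ B).card = A.card + B.card := Finset.card_union_of_disjoint hd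
        have hb : (A ∪ B).card - A.card = B.card := by omega
        simp only [hb]
    rw [hbij, Finset.sum_sigma]
    have inner : ∀ C : Finset E,
        (∑ A ∈ C.powerset,
          (1 / (1 - q)) ^ (n - A.card) * ((-1:ℝ) ^ (C.card - A.card) * q ^ (r - M.rk C)))
        = (1 / (1 - q)) ^ n * ((-1:ℝ) ^ C.card * q ^ (r - M.rk C + C.card)) := by
      intro C
      have key : (∑ A ∈ C.powerset, (1 - q) ^ A.card * (-1:ℝ) ^ (C.card - A.card))
          = (-1:ℝ) ^ C.card * q ^ C.card := by
        have hpa := Finset.prod_add (fun _ : E => (1 - q)) (fun _ : E => (-1:ℝ)) C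
        simp only [Finset.prod_const] at hpa
        have hbase : ((1:ℝ) - q + -1) = -q := by ring
        rw [hbase] at hpa
        have hneg : (-q:ℝ) ^ C.card = (-1:ℝ) ^ C.card * q ^ C.card := by
          rw [neg_pow]
        rw [← hneg, hpa]
        refine Finset.sum_congr rfl fun A hA => ?_
        rw [Finset.mem_powerset] at hA
        rw [Finset.card_sdiff_of_subset hA]
      have expand : ∀ A : Finset E, A ∈ C.powerset →
          (1 / (1 - q)) ^ (n - A.card) * ((-1:ℝ) ^ (C.card - A.card) * q ^ (r - M.rk C))
          = ((1 / (1 - q)) ^ n * q ^ (r - M.rk C)) *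
              ((1 - q) ^ A.card * (-1:ℝ) ^ (C.card - A.card)) := by
        intro A hA
        have h1 : ((1:ℝ) / (1 - q)) ^ (n - A.card)
            = (1 / (1 - q)) ^ n * (((1:ℝ) / (1 - q)) ^ A.card)⁻¹ :=
          pow_sub₀ _ (one_div_ne_zero h1q) (hcardle A)
        have h2 : (((1:ℝ) / (1 - q)) ^ A.card)⁻¹ = (1 - q) ^ A.card := by
          rw [one_div, inv_pow, inv_inv]
        rw [h1, h2]
        ring
      rw [Finset.sum_congr rfl expand, ← Finset.mul_sum, key, pow_add]
      ring
    rw [Finset.sum_congr rfl fun C _ => inner C, ← Finset.mul_sum, hS]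
  rw [hLHS]
  exact hRHS.symm
end

section
/- For any matroid M = (E, r) on a finite ground set E, the characteristic polynomial of the dual matroid satisfies χ_{M*}(x) = ((−1)^{|E|} / x^{r(E)}) · Σ_{A ⊆ E} (1 − x)^{|A|} · χ_{M/A}(x), as an identity of rational functions (or polynomials after clearing x^{r(E)}). -/
open Finset

/-- `χ_{M*}(x) = ((-1)^{|E|} / x^{r(E)}) ∑_{A ⊆ E} (1-x)^{|A|} χ_{M/A}(x)`,
stated as a polynomial identity after clearing `x^{r(E)}`. -/
theorem dualCharPoly_eq_sum_contractions {E : Type*} [Fintype E] [DecidableEq E]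
    (M : FinMatroid E) (x : ℝ) :
    x ^ M.rk Finset.univ * M.dualCharPoly x =
      (-1 : ℝ) ^ Fintype.card E *
        ∑ A : Finset E, (1 - x) ^ A.card * M.contractCharPoly A x := by
  classical
  have hrk0 : M.rk ∅ = 0 := Nat.le_zero.mp (by simpa using M.rk_le_card ∅)
  have hle : ∀ A : Finset E, M.rk univ ≤ M.rk Aᶜ + A.card := by
    intro A
    have h := M.rk_submod Aᶜ A
    have e1 : Aᶜ ∪ A = univ := by ext a; by_cases h : a ∈ A <;> simp [h]
    have e2 : Aᶜ ∩ A = ∅ := by ext a; simp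
    rw [e1, e2, hrk0, add_zero] at h
    exact h.trans (add_le_add_right (M.rk_le_card A) _)
  have hmono : ∀ A : Finset E, M.rk A ≤ M.rk univ := fun A => M.rk_mono (subset_univ A)
  have hexp : ∀ A : Finset E,
      M.rk univ + (M.dualRk univ - M.dualRk A) = (M.rk univ - M.rk Aᶜ) + Aᶜ.card := by
    intro A
    have h1 := hle A
    have h2 := M.rk_le_card Aᶜ
    have h3 := hmono Aᶜ
    have hcc : Aᶜ.card = Fintype.card E - A.card := by rw [Finset.card_compl]
    have hca : A.card ≤ Fintype.card E := Finset.card_le_univ A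
    simp only [FinMatroid.dualRk, compl_univ, hrk0, Finset.card_univ, zero_add]
    omega
  have hL : x ^ M.rk univ * M.dualCharPoly x
      = ∑ C : Finset E, (-1:ℝ) ^ (Fintype.card E - C.card) * x ^ ((M.rk univ - M.rk C) + C.card) := by
    rw [FinMatroid.dualCharPoly, Finset.mul_sum]
    refine Fintype.sum_bijective compl (Function.Involutive.bijective compl_compl) _ _ ?_
    intro A
    rw [← mul_assoc, mul_comm (x ^ M.rk univ), mul_assoc, ← pow_add, hexp A]
    congr 2
    have := Finset.card_le_univ A
    rw [Finset.card_compl]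
    omega
  rw [hL]
  have hR : ∑ A : Finset E, (1 - x) ^ A.card * M.contractCharPoly A x
      = ∑ C : Finset E, ∑ A ∈ C.powerset,
          (1 - x) ^ A.card * ((-1:ℝ) ^ (C \ A).card * x ^ (M.rk univ - M.rk C)) := by
    simp only [FinMatroid.contractCharPoly, Finset.mul_sum]
    rw [Finset.sum_sigma', Finset.sum_sigma']
    refine Finset.sum_nbij' (fun p => ⟨p.1 ∪ p.2, p.1⟩) (fun p => ⟨p.2, p.1 \ p.2⟩)
      ?_ ?_ ?_ ?_ ?_
    · rintro ⟨A, B⟩ hp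
      simp only [Finset.mem_sigma, Finset.mem_univ, Finset.mem_powerset, true_and] at hp ⊢
      exact Finset.subset_union_left
    · rintro ⟨C, A⟩ hp
      simp only [Finset.mem_sigma, Finset.mem_univ, Finset.mem_powerset, true_and] at hp ⊢
      intro a ha
      simp only [Finset.mem_sdiff] at ha
      simp [ha.2]
    · rintro ⟨A, B⟩ hp
      simp only [Finset.mem_sigma, Finset.mem_univ, Finset.mem_powerset, true_and] at hp
      have hdisj : Disjoint A B := by
        rw [Finset.disjoint_left]
        intro a haA haB
        have := hp haB
        simp at this
        exact this haA
      simp [Finset.union_sdiff_cancel_left hdisj]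
    · rintro ⟨C, A⟩ hp
      simp only [Finset.mem_sigma, Finset.mem_univ, Finset.mem_powerset, true_and] at hp
      simp [Finset.union_sdiff_of_subset hp]
    · rintro ⟨A, B⟩ hp
      simp only [Finset.mem_sigma, Finset.mem_univ, Finset.mem_powerset, true_and] at hp
      have hdisj : Disjoint A B := by
        rw [Finset.disjoint_left]
        intro a haA haB
        have := hp haB
        simp at this
        exact this haA
      simp [Finset.union_sdiff_cancel_left hdisj]
  rw [hR]
  have hbin : ∀ C : Finset E,
      ∑ A ∈ C.powerset, (1 - x) ^ A.card * (-1:ℝ) ^ (C \ A).card = (-x) ^ C.card := by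
    intro C
    have h := Finset.prod_add (fun _ : E => (1 - x)) (fun _ => (-1:ℝ)) C
    simp only [Finset.prod_const] at h
    have : (1 - x + -1 : ℝ) = -x := by ring
    rw [this] at h
    exact h.symm
  rw [Finset.mul_sum]
  refine Finset.sum_congr rfl fun C _ => ?_
  have hC : ∑ A ∈ C.powerset, (1 - x) ^ A.card * ((-1:ℝ) ^ (C \ A).card
      * x ^ (M.rk univ - M.rk C))
      = (-x) ^ C.card * x ^ (M.rk univ - M.rk C) := by
    rw [← hbin C, Finset.sum_mul]
    exact Finset.sum_congr rfl fun A _ => by ring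
  have h1 : ((-1:ℝ)) ^ (Fintype.card E - C.card) = (-1) ^ (Fintype.card E + C.card) := by
    have hcard := Finset.card_le_univ C
    have h2 : Fintype.card E + C.card = (Fintype.card E - C.card) + 2 * C.card := by omega
    rw [h2, pow_add, pow_mul, neg_one_sq, one_pow, mul_one]
  rw [hC, h1]
  ring
end

section
/- For any matroid M = (E, r), the convolution formula T_M(x, y) = Σ_{A ⊆ E} T_{M|A}(0, y) · T_{M/A}(x, 0) holds, where the sum is over all subsets A of E. -/
open Finset

private lemma neg_one_pow_sub_real {a b : ℕ} (h : b ≤ a) :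
    (-1:ℝ)^(a-b) = (-1:ℝ)^a * (-1:ℝ)^b := by
  obtain ⟨c, rfl⟩ := Nat.exists_eq_add_of_le h
  rw [Nat.add_sub_cancel_left, ← pow_add]
  have hbc : b + c + b = c + 2 * b := by ring
  rw [hbc, pow_add, pow_mul]
  norm_num

private lemma sum_sdiff_neg_one_pow {E : Type*} [DecidableEq E] (T : Finset E) :
    ∑ S ∈ T.powerset, (-1:ℝ)^((T \ S).card) = if T = ∅ then 1 else 0 := by
  have h : ∀ S ∈ T.powerset, (-1:ℝ)^((T \ S).card) = (-1:ℝ)^T.card * (-1:ℝ)^S.card := by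
    intro S hS
    rw [Finset.card_sdiff_of_subset (Finset.mem_powerset.mp hS),
      neg_one_pow_sub_real (Finset.card_le_card (Finset.mem_powerset.mp hS))]
  rw [Finset.sum_congr rfl h, ← Finset.mul_sum]
  have h3 : ∑ S ∈ T.powerset, (-1:ℝ)^S.card = if T = ∅ then 1 else 0 := by
    have h2 := Finset.sum_powerset_neg_one_pow_card (x := T)
    exact_mod_cast h2
  rw [h3]
  by_cases hT : T = ∅ <;> simp [hT]

private lemma key_sum {E : Type*} [Fintype E] [DecidableEq E] (B D : Finset E) :
    (∑ A : Finset E, if B ⊆ A ∧ A ⊆ D then (-1:ℝ)^((D \ A).card) else 0)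
      = if B = D then 1 else 0 := by
  by_cases hBD : B ⊆ D
  · rw [← Finset.sum_filter]
    have hbij : ∑ A ∈ univ.filter (fun A => B ⊆ A ∧ A ⊆ D), (-1:ℝ)^((D \ A).card)
        = ∑ S ∈ (D \ B).powerset, (-1:ℝ)^(((D \ B) \ S).card) := by
      refine Finset.sum_bij' (i := fun A _ => A \ B) (j := fun S _ => B ∪ S) ?_ ?_ ?_ ?_ ?_
      · intro A hA
        simp only [Finset.mem_filter] at hA
        exact Finset.mem_powerset.mpr (Finset.sdiff_subset_sdiff hA.2.2 Finset.Subset.rfl)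
      · intro S hS
        simp only [Finset.mem_powerset] at hS
        simp only [Finset.mem_filter, Finset.mem_univ, true_and]
        exact ⟨Finset.subset_union_left, Finset.union_subset hBD (hS.trans Finset.sdiff_subset)⟩
      · intro A hA
        simp only [Finset.mem_filter] at hA
        exact Finset.union_sdiff_of_subset hA.2.1
      · intro S hS
        simp only [Finset.mem_powerset] at hS
        exact Finset.union_sdiff_cancel_left (Finset.disjoint_sdiff.mono_right hS)
      · intro A hA
        simp only [Finset.mem_filter] at hA
        have hBA := hA.2.1
        have hset : D \ A = (D \ B) \ (A \ B) := by
          ext e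
          simp only [Finset.mem_sdiff]
          have := @hBA e
          tauto
        rw [hset]
    rw [hbij, sum_sdiff_neg_one_pow]
    by_cases h : B = D
    · simp [h]
    · rw [if_neg h, if_neg]
      intro heq
      exact h (Finset.Subset.antisymm hBD (Finset.sdiff_eq_empty_iff_subset.mp heq))
  · rw [if_neg (by rintro rfl; exact hBD Finset.Subset.rfl)]
    refine Finset.sum_eq_zero fun A _ => ?_
    rw [if_neg]
    rintro ⟨h1, h2⟩
    exact hBD (h1.trans h2)

/-- The Kook–Reiner–Stanton convolution formula:
`T_M(x,y) = ∑_{A ⊆ E} T_{M|A}(0,y) T_{M/A}(x,0)`. -/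
theorem tutte_convolution {E : Type*} [Fintype E] [DecidableEq E]
    (M : FinMatroid E) (x y : ℝ) :
    M.tutte x y = ∑ A : Finset E, M.restrictTutte A 0 y * M.contractTutte A x 0 := by
  classical
  set g : Finset E → ℝ := fun B => (-1:ℝ)^(M.rk B) * (y-1)^(B.card - M.rk B) with hg
  set h : Finset E → ℝ := fun D => (-1:ℝ)^(M.rk D) * (x-1)^(M.rk univ - M.rk D) with hh
  set F : Finset E → Finset E → Finset E → ℝ := fun A B D =>
    (if B ⊆ A then g B else 0) * (if A ⊆ D then h D * (-1:ℝ)^((D \ A).card) else 0) with hF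
  have hres : ∀ A : Finset E, M.restrictTutte A 0 y
      = (-1:ℝ)^(M.rk A) * ∑ B : Finset E, (if B ⊆ A then g B else 0) := by
    intro A
    have hp : (∑ B : Finset E, if B ⊆ A then g B else 0) = ∑ B ∈ A.powerset, g B := by
      rw [← Finset.sum_filter]
      congr 1
      ext B
      simp [Finset.mem_powerset]
    rw [hp, FinMatroid.restrictTutte, Finset.mul_sum]
    refine Finset.sum_congr rfl fun B hB => ?_
    have hBA : M.rk B ≤ M.rk A := M.rk_mono (Finset.mem_powerset.mp hB)
    have h01 : (0:ℝ) - 1 = -1 := by norm_num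
    rw [h01, neg_one_pow_sub_real hBA, hg]
    ring
  have hcon : ∀ A : Finset E, M.contractTutte A x 0 =
      (-1:ℝ)^(M.rk A) * ∑ D : Finset E,
        (if A ⊆ D then h D * (-1:ℝ)^((D \ A).card) else 0) := by
    intro A
    rw [FinMatroid.contractTutte, Finset.mul_sum]
    simp only [mul_ite, mul_zero]
    rw [← Finset.sum_filter]
    refine Finset.sum_bij' (i := fun C _ => A ∪ C) (j := fun D _ => D \ A) ?_ ?_ ?_ ?_ ?_
    · intro C _
      simp only [Finset.mem_filter, Finset.mem_univ, true_and]
      exact Finset.subset_union_left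
    · intro D _
      simp only [Finset.mem_powerset]
      intro e he
      simp only [Finset.mem_sdiff] at he
      simp only [Finset.mem_compl]
      exact he.2
    · intro C hC
      simp only [Finset.mem_powerset] at hC
      have hdisj : Disjoint A C :=
        Finset.disjoint_left.mpr fun a ha hc => (Finset.mem_compl.mp (hC hc)) ha
      exact Finset.union_sdiff_cancel_left hdisj
    · intro D hD
      simp only [Finset.mem_filter, Finset.mem_univ, true_and] at hD
      exact Finset.union_sdiff_of_subset hD
    · intro C hC
      simp only [Finset.mem_powerset] at hC
      have hdisj : Disjoint A C :=
        Finset.disjoint_left.mpr fun a ha hc => (Finset.mem_compl.mp (hC hc)) ha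
      have hACeq : (A ∪ C) \ A = C := Finset.union_sdiff_cancel_left hdisj
      have hAC1 : M.rk A ≤ M.rk (A ∪ C) := M.rk_mono Finset.subset_union_left
      have hAC2 : M.rk (A ∪ C) ≤ M.rk univ := M.rk_mono (Finset.subset_univ _)
      have hAC3 : M.rk (A ∪ C) - M.rk A ≤ C.card := by
        have h1 := M.rk_submod A C
        have h2 := M.rk_le_card C
        omega
      have hexp : (M.rk univ - M.rk A) - (M.rk (A ∪ C) - M.rk A)
          = M.rk univ - M.rk (A ∪ C) := by omega
      have h01 : (0:ℝ) - 1 = -1 := by norm_num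
      rw [hACeq, hexp, h01, neg_one_pow_sub_real hAC3, neg_one_pow_sub_real hAC1, hh]
      ring
  have hsq : ∀ n : ℕ, (-1:ℝ)^n * (-1:ℝ)^n = 1 := by
    intro n
    rw [← pow_add]
    exact Even.neg_one_pow ⟨n, rfl⟩
  have step : ∀ A : Finset E, M.restrictTutte A 0 y * M.contractTutte A x 0
      = ∑ B : Finset E, ∑ D : Finset E, F A B D := by
    intro A
    rw [hres A, hcon A, mul_mul_mul_comm, hsq, one_mul, Finset.sum_mul_sum]
  calc M.tutte x y = ∑ B : Finset E, g B * h B := by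
        rw [FinMatroid.tutte]
        refine Finset.sum_congr rfl fun B _ => ?_
        have := hsq (M.rk B)
        rw [hg, hh]
        linear_combination
          (-((x-1)^(M.rk univ - M.rk B) * (y-1)^(B.card - M.rk B))) * this
    _ = ∑ B : Finset E, ∑ D : Finset E, (g B * h D) * (if B = D then 1 else 0) := by
        refine Finset.sum_congr rfl fun B _ => ?_
        simp
    _ = ∑ B : Finset E, ∑ D : Finset E, (g B * h D) *
          (∑ A : Finset E, if B ⊆ A ∧ A ⊆ D then (-1:ℝ)^((D \ A).card) else 0) := by
        refine Finset.sum_congr rfl fun B _ => Finset.sum_congr rfl fun D _ => ?_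
        rw [key_sum]
    _ = ∑ B : Finset E, ∑ D : Finset E, ∑ A : Finset E, F A B D := by
        refine Finset.sum_congr rfl fun B _ => Finset.sum_congr rfl fun D _ => ?_
        rw [Finset.mul_sum]
        refine Finset.sum_congr rfl fun A _ => ?_
        rw [hF]
        by_cases h1 : B ⊆ A <;> by_cases h2 : A ⊆ D <;>
          simp [h1, h2] <;> ring
    _ = ∑ B : Finset E, ∑ A : Finset E, ∑ D : Finset E, F A B D :=
        Finset.sum_congr rfl fun B _ => Finset.sum_comm
    _ = ∑ A : Finset E, ∑ B : Finset E, ∑ D : Finset E, F A B D := Finset.sum_comm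
    _ = ∑ A : Finset E, M.restrictTutte A 0 y * M.contractTutte A x 0 :=
        Finset.sum_congr rfl fun A _ => (step A).symm
end

section
/- For the complete graph K_n on n vertices, the flow polynomial satisfies F_{K_n}(x) = ((−1)^{n(n−1)/2} / x^n) · Σ_λ f(λ) · (1 − x)^{s(λ)} · x(x−1)⋯(x − ℓ(λ) + 1), where the sum is over all integer partitions λ of n, ℓ(λ) is the number of parts, s(λ) = Σ_i λ_i(λ_i − 1)/2, and f(λ) is the Faà di Bruno coefficient of λ. -/
open Finset

/-- The edge set of the complete graph `K_n`: unordered pairs, encoded as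
ordered pairs `(i, j)` with `i < j`. -/
def KEdge (n : ℕ) : Type := {p : Fin n × Fin n // p.1 < p.2}

instance (n : ℕ) : Fintype (KEdge n) := Subtype.fintype _
instance (n : ℕ) : DecidableEq (KEdge n) := Subtype.instDecidableEq

/-- The spanning subgraph of `K_n` with edge set `A`. -/
def graphOf (n : ℕ) (A : Finset (KEdge n)) : SimpleGraph (Fin n) where
  Adj i j := ∃ e ∈ A, (e.val = (i, j) ∨ e.val = (j, i))
  symm := by
    constructor
    intro i j ⟨e, he, h⟩
    exact ⟨e, he, h.symm⟩
  loopless := by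
    constructor
    rintro i ⟨e, he, h⟩
    rcases h with h | h <;>
      · have := e.property
        rw [h] at this
        exact lt_irrefl i this

/-- The rank function of the cycle matroid of `K_n`:
`r(A) = |V| - c(A)`, the number of vertices minus the number of connected
components of the spanning subgraph with edge set `A`. -/
noncomputable def cycleRk (n : ℕ) (A : Finset (KEdge n)) : ℕ :=
  n - Nat.card (graphOf n A).ConnectedComponent

/-- The rank function of the bond matroid (dual of the cycle matroid) of `K_n`. -/
noncomputable def bondRk (n : ℕ) (A : Finset (KEdge n)) : ℕ :=
  cycleRk n Aᶜ + A.card - cycleRk n univ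

/-- The flow polynomial of `K_n`, i.e. the characteristic polynomial of the
bond matroid of `K_n`, as a polynomial in `ℝ[x]`. -/
noncomputable def flowPolyKn (n : ℕ) : Polynomial ℝ :=
  ∑ A : Finset (KEdge n),
    ((-1 : ℝ) ^ A.card) • (Polynomial.X ^ (bondRk n univ - bondRk n A))

/-- `s(λ) = ∑_i λ_i (λ_i - 1) / 2` for a partition `λ`. -/
def partS (n : ℕ) (lam : n.Partition) : ℕ :=
  (lam.parts.map fun a => a * (a - 1) / 2).sum

/-- The Faà di Bruno coefficient `f(λ) = n! / (∏_i (i!)^{n_i} n_i!)`. -/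
def faaDiBruno (n : ℕ) (lam : n.Partition) : ℕ :=
  Nat.factorial n /
    ∏ i ∈ lam.parts.toFinset,
      (Nat.factorial i ^ lam.parts.count i * Nat.factorial (lam.parts.count i))


namespace FlowAux

variable {V : Type*}

lemma walk_cases {G H : SimpleGraph V} {u v : V} (hGH : G ≤ H)
    (h : ∀ a b, H.Adj a b → G.Adj a b ∨ ((a = u ∧ b = v) ∨ (a = v ∧ b = u)))
    {a b : V} (p : H.Walk a b) :
    G.Reachable a b ∨ ((G.Reachable a u ∨ G.Reachable a v) ∧
      (G.Reachable b u ∨ G.Reachable b v)) := by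
  induction p with
  | nil => exact Or.inl (.refl _)
  | @cons a c b hadj p ih =>
    rcases h _ _ hadj with hg | hcase
    · rcases ih with hr | ⟨hc, hb⟩
      · exact Or.inl (hg.reachable.trans hr)
      · refine Or.inr ⟨?_, hb⟩
        rcases hc with h1 | h1
        · exact Or.inl (hg.reachable.trans h1)
        · exact Or.inr (hg.reachable.trans h1)
    · have ha : G.Reachable a u ∨ G.Reachable a v := by
        rcases hcase with ⟨h1, _⟩ | ⟨h1, _⟩
        · exact Or.inl (h1 ▸ SimpleGraph.Reachable.refl _)
        · exact Or.inr (h1 ▸ SimpleGraph.Reachable.refl _)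
      have hc : G.Reachable c u ∨ G.Reachable c v := by
        rcases hcase with ⟨_, h2⟩ | ⟨_, h2⟩
        · exact Or.inr (h2 ▸ SimpleGraph.Reachable.refl _)
        · exact Or.inl (h2 ▸ SimpleGraph.Reachable.refl _)
      rcases ih with hr | ⟨_, hb⟩
      · refine Or.inr ⟨ha, ?_⟩
        rcases hc with h1 | h1
        · exact Or.inl (hr.symm.trans h1)
        · exact Or.inr (hr.symm.trans h1)
      · exact Or.inr ⟨ha, hb⟩

lemma card_cc_le [Finite V] {G H : SimpleGraph V} (u v : V) (hGH : G ≤ H)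
    (h : ∀ a b, H.Adj a b → G.Adj a b ∨ ((a = u ∧ b = v) ∨ (a = v ∧ b = u))) :
    Nat.card G.ConnectedComponent ≤ Nat.card H.ConnectedComponent + 1 := by
  classical
  have key : ∀ a b : V, H.Reachable a b →
      G.Reachable a b ∨ ((G.Reachable a u ∨ G.Reachable a v) ∧
        (G.Reachable b u ∨ G.Reachable b v)) := by
    intro a b hr
    exact walk_cases hGH h hr.some
  set f : V → H.ConnectedComponent ⊕ Unit := fun a =>
    if G.Reachable a v ∧ ¬ G.Reachable a u then Sum.inr ()
    else Sum.inl (H.connectedComponentMk a) with hf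
  have hwd : ∀ (a b : V) (p : G.Walk a b), p.IsPath → f a = f b := by
    intro a b p _
    have hab : G.Reachable a b := p.reachable
    have h1 : (G.Reachable a v ∧ ¬ G.Reachable a u) ↔
        (G.Reachable b v ∧ ¬ G.Reachable b u) := by
      constructor
      · rintro ⟨h1, h2⟩
        exact ⟨hab.symm.trans h1, fun hc => h2 (hab.trans hc)⟩
      · rintro ⟨h1, h2⟩
        exact ⟨hab.trans h1, fun hc => h2 (hab.symm.trans hc)⟩
    have h2 : H.connectedComponentMk a = H.connectedComponentMk b :=
      SimpleGraph.ConnectedComponent.sound (hab.mono hGH)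
    simp only [hf]
    by_cases hc : G.Reachable a v ∧ ¬ G.Reachable a u
    · rw [if_pos hc, if_pos (h1.mp hc)]
    · rw [if_neg hc, if_neg (fun hd => hc (h1.mpr hd)), h2]
  set ψ : G.ConnectedComponent → H.ConnectedComponent ⊕ Unit :=
    SimpleGraph.ConnectedComponent.lift f hwd with hψ
  have hinj : Function.Injective ψ := by
    refine SimpleGraph.ConnectedComponent.ind₂ ?_
    intro a b hab
    simp only [hψ, SimpleGraph.ConnectedComponent.lift_mk, hf] at hab
    by_cases h1 : G.Reachable a v ∧ ¬ G.Reachable a u <;>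
      by_cases h2 : G.Reachable b v ∧ ¬ G.Reachable b u
    · exact SimpleGraph.ConnectedComponent.sound (h1.1.trans h2.1.symm)
    · rw [if_pos h1, if_neg h2] at hab; exact absurd hab (by simp)
    · rw [if_neg h1, if_pos h2] at hab; exact absurd hab (by simp)
    · rw [if_neg h1, if_neg h2] at hab
      have hab' : H.Reachable a b :=
        SimpleGraph.ConnectedComponent.eq.mp (Sum.inl_injective hab)
      rcases key a b hab' with hr | ⟨ha, hb⟩
      · exact SimpleGraph.ConnectedComponent.sound hr
      · have hau : G.Reachable a u := by
          rcases ha with h' | h'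
          · exact h'
          · by_contra hcon; exact h1 ⟨h', hcon⟩
        have hbu : G.Reachable b u := by
          rcases hb with h' | h'
          · exact h'
          · by_contra hcon; exact h2 ⟨h', hcon⟩
        exact SimpleGraph.ConnectedComponent.sound (hau.trans hbu.symm)
  calc Nat.card G.ConnectedComponent
      ≤ Nat.card (H.ConnectedComponent ⊕ Unit) := Nat.card_le_card_of_injective ψ hinj
    _ = Nat.card H.ConnectedComponent + 1 := by simp [Nat.card_sum]

end FlowAux

open Finset

namespace FlowAux

/-- number of connected components -/
noncomputable def ncc (n : ℕ) (B : Finset (KEdge n)) : ℕ :=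
  Nat.card (graphOf n B).ConnectedComponent

lemma graphOf_mono {n : ℕ} {A B : Finset (KEdge n)} (h : A ⊆ B) :
    graphOf n A ≤ graphOf n B := by
  intro i j ⟨e, he, hor⟩
  exact ⟨e, h he, hor⟩

lemma ncc_insert_le {n : ℕ} (B : Finset (KEdge n)) (e : KEdge n) :
    ncc n B ≤ ncc n (insert e B) + 1 := by
  classical
  refine card_cc_le e.val.1 e.val.2 (graphOf_mono (Finset.subset_insert e B)) ?_
  rintro a b ⟨e', he', hor⟩
  rcases Finset.mem_insert.mp he' with rfl | he'
  · right
    rcases hor with h | h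
    · exact Or.inl ⟨(congrArg Prod.fst h).symm, (congrArg Prod.snd h).symm⟩
    · exact Or.inr ⟨(congrArg Prod.snd h).symm, (congrArg Prod.fst h).symm⟩
  · exact Or.inl ⟨e', he', hor⟩

lemma ncc_le_union {n : ℕ} (C B : Finset (KEdge n)) :
    ncc n B ≤ ncc n (B ∪ C) + C.card := by
  classical
  induction C using Finset.induction_on with
  | empty => simp
  | @insert a C ha ih =>
    calc ncc n B ≤ ncc n (B ∪ C) + C.card := ih
      _ ≤ (ncc n (insert a (B ∪ C)) + 1) + C.card := by
          exact Nat.add_le_add_right (ncc_insert_le (B ∪ C) a) _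
      _ = ncc n (B ∪ insert a C) + (insert a C).card := by
          rw [Finset.union_insert, Finset.card_insert_of_notMem ha]
          omega

lemma graphOf_empty (n : ℕ) : graphOf n ∅ = ⊥ := by
  ext i j
  simp [graphOf]

lemma ncc_empty (n : ℕ) : ncc n ∅ = n := by
  rw [ncc, graphOf_empty]
  have e : (⊥ : SimpleGraph (Fin n)).ConnectedComponent ≃ Fin n := by
    refine ⟨SimpleGraph.ConnectedComponent.lift id ?_, SimpleGraph.connectedComponentMk _,
      ?_, fun v => rfl⟩
    · intro v w p _
      have := p.reachable
      rwa [SimpleGraph.reachable_bot] at this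
    · refine SimpleGraph.ConnectedComponent.ind fun v => rfl
  rw [Nat.card_congr e, Nat.card_eq_fintype_card, Fintype.card_fin]

lemma ncc_univ (n : ℕ) (hn : 0 < n) : ncc n univ = 1 := by
  have hpre : (graphOf n univ).Preconnected := by
    intro i j
    rcases lt_trichotomy i j with h | h | h
    · have hadj : (graphOf n univ).Adj i j := ⟨⟨(i, j), h⟩, Finset.mem_univ _, Or.inl rfl⟩
      exact hadj.reachable
    · exact h ▸ SimpleGraph.Reachable.refl _
    · have hadj : (graphOf n univ).Adj j i := ⟨⟨(j, i), h⟩, Finset.mem_univ _, Or.inl rfl⟩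
      exact hadj.reachable.symm
  have : Subsingleton (graphOf n univ).ConnectedComponent :=
    hpre.subsingleton_connectedComponent
  have hne : Nonempty (graphOf n univ).ConnectedComponent :=
    ⟨SimpleGraph.connectedComponentMk (graphOf n univ) (⟨0, hn⟩ : Fin n)⟩
  exact Nat.card_eq_one_iff_unique.mpr ⟨this, hne⟩

lemma finite_cc {n : ℕ} (B : Finset (KEdge n)) :
    Finite (graphOf n B).ConnectedComponent :=
  Finite.of_surjective (SimpleGraph.connectedComponentMk (graphOf n B))
    (SimpleGraph.ConnectedComponent.ind fun v => ⟨v, rfl⟩)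

lemma ncc_pos {n : ℕ} (hn : 0 < n) (B : Finset (KEdge n)) : 0 < ncc n B :=
  Nat.card_pos_iff.mpr
    ⟨⟨SimpleGraph.connectedComponentMk (graphOf n B) (⟨0, hn⟩ : Fin n)⟩, finite_cc B⟩

lemma ncc_le {n : ℕ} (B : Finset (KEdge n)) : ncc n B ≤ n := by
  calc ncc n B ≤ Nat.card (Fin n) :=
        Nat.card_le_card_of_surjective (SimpleGraph.connectedComponentMk (graphOf n B))
          (SimpleGraph.ConnectedComponent.ind fun v => ⟨v, rfl⟩)
    _ = n := by rw [Nat.card_eq_fintype_card, Fintype.card_fin]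

lemma ncc_le_one_add {n : ℕ} (hn : 0 < n) (B : Finset (KEdge n)) :
    ncc n B ≤ 1 + Bᶜ.card := by
  calc ncc n B ≤ ncc n (B ∪ Bᶜ) + Bᶜ.card := ncc_le_union _ _
    _ = 1 + Bᶜ.card := by rw [Finset.union_compl, ncc_univ n hn, Nat.add_comm]

lemma le_ncc_add {n : ℕ} (B : Finset (KEdge n)) : n ≤ ncc n B + B.card := by
  calc n = ncc n ∅ := (ncc_empty n).symm
    _ ≤ ncc n (∅ ∪ B) + B.card := ncc_le_union _ _
    _ = ncc n B + B.card := by rw [Finset.empty_union]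

end FlowAux

namespace FlowAux

lemma card_lt_pairs {n : ℕ} (S : Finset (Fin n)) :
    ((S ×ˢ S).filter fun p => p.1 < p.2).card = S.card.choose 2 := by
  classical
  have hswap : ((S ×ˢ S).filter fun p => p.1 < p.2).card
      = ((S ×ˢ S).filter fun p => p.2 < p.1).card := by
    refine Finset.card_bij (fun p _ => (p.2, p.1)) ?_ ?_ ?_
    · intro p hp
      simp only [Finset.mem_filter, Finset.mem_product] at hp ⊢
      exact ⟨⟨hp.1.2, hp.1.1⟩, hp.2⟩
    · intro p hp q hq h
      simp only [Prod.mk.injEq] at h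
      exact Prod.ext h.2 h.1
    · intro p hp
      simp only [Finset.mem_filter, Finset.mem_product] at hp ⊢
      exact ⟨(p.2, p.1), ⟨⟨hp.1.2, hp.1.1⟩, hp.2⟩, rfl⟩
  have hunion : S.offDiag = ((S ×ˢ S).filter fun p => p.1 < p.2)
      ∪ ((S ×ˢ S).filter fun p => p.2 < p.1) := by
    ext p
    simp only [Finset.mem_offDiag, Finset.mem_union, Finset.mem_filter, Finset.mem_product]
    constructor
    · rintro ⟨h1, h2, h3⟩
      rcases lt_or_gt_of_ne h3 with h | h
      · exact Or.inl ⟨⟨h1, h2⟩, h⟩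
      · exact Or.inr ⟨⟨h1, h2⟩, h⟩
    · rintro (⟨⟨h1, h2⟩, h⟩ | ⟨⟨h1, h2⟩, h⟩)
      · exact ⟨h1, h2, ne_of_lt h⟩
      · exact ⟨h1, h2, (ne_of_lt h).symm⟩
  have hdisj : Disjoint ((S ×ˢ S).filter fun p => p.1 < p.2)
      ((S ×ˢ S).filter fun p => p.2 < p.1) := by
    rw [Finset.disjoint_left]
    intro p hp1 hp2
    rw [Finset.mem_filter] at hp1 hp2
    exact absurd (lt_trans hp1.2 hp2.2) (lt_irrefl _)
  have hcard := Finset.offDiag_card S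
  rw [hunion, Finset.card_union_of_disjoint hdisj, ← hswap] at hcard
  rw [Nat.choose_two_right]
  have hsq : S.card * S.card - S.card = S.card * (S.card - 1) := by
    cases' S.card with k
    · rfl
    · simp [Nat.succ_sub_one, Nat.mul_succ, Nat.succ_mul]
  rw [hsq] at hcard
  omega

lemma card_KEdge (n : ℕ) : Fintype.card (KEdge n) = n * (n - 1) / 2 := by
  classical
  have h0 : Fintype.card (KEdge n)
      = (Finset.univ.filter fun p : Fin n × Fin n => p.1 < p.2).card :=
    Fintype.card_subtype _
  have h1 : (Finset.univ.filter fun p : Fin n × Fin n => p.1 < p.2)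
      = ((Finset.univ ×ˢ Finset.univ).filter fun p : Fin n × Fin n => p.1 < p.2) := by
    rw [Finset.univ_product_univ]
  rw [h0, h1, card_lt_pairs, Finset.card_univ, Fintype.card_fin, Nat.choose_two_right]

lemma exponent_eq {n : ℕ} (hn : 0 < n) (A : Finset (KEdge n)) :
    bondRk n Finset.univ - bondRk n A + n = Aᶜ.card + ncc n Aᶜ := by
  have h1 : ncc n Finset.univ = 1 := ncc_univ n hn
  have h2 : ncc n (∅ : Finset (KEdge n)) = n := ncc_empty n
  have h3 : ncc n Aᶜ ≤ 1 + A.card := by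
    have := ncc_le_one_add hn Aᶜ
    rwa [compl_compl] at this
  have h4 : n ≤ ncc n Aᶜ + Aᶜ.card := le_ncc_add Aᶜ
  have h5 : ncc n Aᶜ ≤ n := ncc_le Aᶜ
  have h6 : A.card + Aᶜ.card = Fintype.card (KEdge n) := Finset.card_add_card_compl A
  have h7 : (Finset.univ : Finset (KEdge n)).card = Fintype.card (KEdge n) :=
    Finset.card_univ
  have h8 : (Finset.univ : Finset (KEdge n))ᶜ = ∅ := Finset.compl_univ
  simp only [ncc] at h1 h2 h3 h4 h5
  simp only [bondRk, cycleRk, ncc, h8, h2, h1, h7]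
  omega

lemma eval_flowPoly {n : ℕ} (hn : 0 < n) (x : ℝ) :
    x ^ n * (flowPolyKn n).eval x =
      (-1 : ℝ) ^ (Fintype.card (KEdge n)) *
        ∑ B : Finset (KEdge n), (-x) ^ B.card * x ^ (ncc n B) := by
  classical
  have heval : (flowPolyKn n).eval x
      = ∑ A : Finset (KEdge n), (-1 : ℝ) ^ A.card * x ^ (bondRk n Finset.univ - bondRk n A) := by
    simp [flowPolyKn, Polynomial.eval_finset_sum, smul_eq_mul]
  rw [heval, Finset.mul_sum]
  have step1 : ∀ A : Finset (KEdge n),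
      x ^ n * ((-1 : ℝ) ^ A.card * x ^ (bondRk n Finset.univ - bondRk n A))
      = (-1 : ℝ) ^ A.card * x ^ (Aᶜ.card + ncc n Aᶜ) := by
    intro A
    rw [← exponent_eq hn A, pow_add]
    ring
  rw [Finset.sum_congr rfl fun A _ => step1 A]
  rw [Fintype.sum_bijective (fun A : Finset (KEdge n) => Aᶜ)
    (Function.Involutive.bijective fun A => compl_compl A) _
    (fun B : Finset (KEdge n) => (-1 : ℝ) ^ Bᶜ.card * x ^ (B.card + ncc n B))
    (fun A => by simp only [compl_compl])]
  rw [Finset.mul_sum]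
  refine Finset.sum_congr rfl fun B _ => ?_
  have h6 : Bᶜ.card + 2 * B.card = Fintype.card (KEdge n) + B.card := by
    have := Finset.card_add_card_compl B
    omega
  have hsign : (-1 : ℝ) ^ Bᶜ.card = (-1 : ℝ) ^ (Fintype.card (KEdge n)) * (-1) ^ B.card := by
    have : ((-1 : ℝ)) ^ (Bᶜ.card + 2 * B.card) = (-1 : ℝ) ^ (Fintype.card (KEdge n) + B.card) := by
      rw [h6]
    rw [pow_add, pow_add, pow_mul, neg_one_sq, one_pow, mul_one] at this
    rw [this]
  rw [hsign, pow_add, neg_pow x]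
  ring

end FlowAux

namespace FlowAux

open Finset

/-- Functions constant on edges of `B` are counted by `q ^ (number of components)`. -/
lemma count_colorings (n q : ℕ) (B : Finset (KEdge n)) :
    ((Finset.univ.filter
      fun f : Fin n → Fin q => ∀ e ∈ B, f e.val.1 = f e.val.2).card) = q ^ (ncc n B) := by
  classical
  have hwalk : ∀ (f : Fin n → Fin q), (∀ e ∈ B, f e.val.1 = f e.val.2) →
      ∀ (v w : Fin n) (p : (graphOf n B).Walk v w), f v = f w := by
    intro f hf v w p
    induction p with
    | nil => rfl
    | @cons a c b hadj p ih =>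
      obtain ⟨e, he, hor⟩ := hadj
      have h1 : f a = f c := by
        rcases hor with h | h
        · have := hf e he; rw [h] at this; exact this
        · have := hf e he; rw [h] at this; exact this.symm
      exact h1.trans ih
  have E : {f : Fin n → Fin q // ∀ e ∈ B, f e.val.1 = f e.val.2}
      ≃ ((graphOf n B).ConnectedComponent → Fin q) := by
    refine ⟨fun fp => SimpleGraph.ConnectedComponent.lift fp.val
        (fun v w p _ => hwalk fp.val fp.property v w p),
      fun g => ⟨fun v => g ((graphOf n B).connectedComponentMk v), ?_⟩, ?_, ?_⟩
    · intro e he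
      have hadj : (graphOf n B).Adj e.val.1 e.val.2 := ⟨e, he, Or.inl (Prod.mk.eta).symm⟩
      exact congrArg g (SimpleGraph.ConnectedComponent.sound hadj.reachable)
    · intro fp
      exact Subtype.ext rfl
    · intro g
      funext c
      refine SimpleGraph.ConnectedComponent.ind (fun v => rfl) c
  have h1 : (Finset.univ.filter
      fun f : Fin n → Fin q => ∀ e ∈ B, f e.val.1 = f e.val.2).card
      = Nat.card {f : Fin n → Fin q // ∀ e ∈ B, f e.val.1 = f e.val.2} := by
    rw [Nat.card_eq_fintype_card, Fintype.card_subtype]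
  rw [h1, Nat.card_congr E]
  haveI := finite_cc B
  rw [Nat.card_fun]
  congr 1
  rw [Nat.card_eq_fintype_card, Fintype.card_fin]

/-- The monochromatic edge set of a coloring. -/
def mono {n q : ℕ} (f : Fin n → Fin q) : Finset (KEdge n) :=
  Finset.univ.filter fun e : KEdge n => f e.val.1 = f e.val.2

/-- Lemma A : subset expansion. -/
lemma sum_ncc_eq (n q : ℕ) (x : ℝ) :
    ∑ B : Finset (KEdge n), (-x) ^ B.card * (q : ℝ) ^ (ncc n B)
      = ∑ f : Fin n → Fin q, (1 - x) ^ (mono f).card := by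
  classical
  have step1 : ∀ B : Finset (KEdge n),
      (-x) ^ B.card * (q : ℝ) ^ (ncc n B)
        = ∑ f : Fin n → Fin q, if (∀ e ∈ B, f e.val.1 = f e.val.2) then (-x) ^ B.card else 0 := by
    intro B
    rw [← Finset.sum_filter, Finset.sum_const, count_colorings n q B]
    simp [nsmul_eq_mul, Nat.cast_pow, mul_comm]
  rw [Finset.sum_congr rfl fun B _ => step1 B, Finset.sum_comm]
  refine Finset.sum_congr rfl fun f _ => ?_
  have step2 : ∀ B : Finset (KEdge n), (∀ e ∈ B, f e.val.1 = f e.val.2) ↔ B ⊆ mono f := by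
    intro B
    constructor
    · intro h e he
      exact Finset.mem_filter.mpr ⟨Finset.mem_univ _, h e he⟩
    · intro h e he
      exact (Finset.mem_filter.mp (h he)).2
  calc (∑ B : Finset (KEdge n), if (∀ e ∈ B, f e.val.1 = f e.val.2) then (-x) ^ B.card else 0)
      = ∑ B : Finset (KEdge n), if B ⊆ mono f then (-x) ^ B.card else 0 := by
        refine Finset.sum_congr rfl fun B _ => ?_
        rw [if_congr (step2 B) rfl rfl]
    _ = ∑ B ∈ (mono f).powerset, (-x) ^ B.card := by
        have hps : (mono f).powerset = Finset.univ.filter (· ⊆ mono f) := by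
          ext B; simp [Finset.mem_powerset]
        rw [hps, Finset.sum_filter]
    _ = (1 - x) ^ (mono f).card := by
        have := Finset.prod_add (fun _ : KEdge n => -x) (fun _ : KEdge n => (1:ℝ)) (mono f)
        simp only [Finset.prod_const, one_pow, mul_one] at this
        rw [← this]
        ring_nf

end FlowAux

namespace FlowAux

open Finset

/-- Sum over colorings weighted by fiber sizes. -/
noncomputable def Wgen (t : ℝ) (q : ℕ) (α : Type) [Fintype α] [DecidableEq α] : ℝ :=
  ∑ f : α → Fin q, t ^ (∑ c : Fin q, ((Finset.univ.filter fun a => f a = c).card.choose 2))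

lemma Wgen_congr {t : ℝ} {q : ℕ} {α β : Type} [Fintype α] [DecidableEq α] [Fintype β]
    [DecidableEq β] (e : α ≃ β) : Wgen t q α = Wgen t q β := by
  refine Fintype.sum_equiv ⟨fun f => f ∘ e.symm, fun g => g ∘ e,
    fun f => by funext a; simp, fun g => by funext b; simp⟩ _ _ ?_
  intro f
  congr 1
  refine Finset.sum_congr rfl fun c _ => ?_
  congr 1
  refine Finset.card_bij (fun a _ => e a) ?_ ?_ ?_
  · intro a ha
    simp only [Finset.mem_filter, Finset.mem_univ, true_and, Function.comp] at ha ⊢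
    simpa using ha
  · intro a _ b _ h
    exact e.injective h
  · intro b hb
    simp only [Finset.mem_filter, Finset.mem_univ, true_and, Function.comp] at hb ⊢
    exact ⟨e.symm b, hb, by simp⟩

lemma Wgen_zero_left (t : ℝ) : Wgen t 0 (Fin 0) = 1 := by
  rw [Wgen]
  rw [Fintype.sum_eq_single (fun a : Fin 0 => a.elim0) (fun f hf =>
    absurd (funext fun a => a.elim0) hf)]
  simp

lemma Wgen_zero_pos (t : ℝ) {m : ℕ} (hm : 0 < m) : Wgen t 0 (Fin m) = 0 := by
  haveI : IsEmpty (Fin m → Fin 0) := ⟨fun f => (f ⟨0, hm⟩).elim0⟩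
  rw [Wgen, Finset.univ_eq_empty, Finset.sum_empty]

lemma Wgen_succ (t : ℝ) (q m : ℕ) :
    Wgen t (q + 1) (Fin m) =
      ∑ j ∈ Finset.range (m + 1),
        (m.choose j : ℝ) * t ^ (j.choose 2) * Wgen t q (Fin (m - j)) := by
  classical
  -- fiberwise over the preimage of the last color
  have h0 : Wgen t (q + 1) (Fin m)
      = ∑ S : Finset (Fin m), ∑ f ∈ Finset.univ.filter
          (fun f : Fin m → Fin (q + 1) => Finset.univ.filter (fun a => f a = Fin.last q) = S),
          t ^ (∑ c : Fin (q + 1), ((Finset.univ.filter fun a => f a = c).card.choose 2)) :=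
    (Finset.sum_fiberwise _ _ _).symm
  have hS : ∀ S : Finset (Fin m),
      (∑ f ∈ Finset.univ.filter
          (fun f : Fin m → Fin (q + 1) => Finset.univ.filter (fun a => f a = Fin.last q) = S),
          t ^ (∑ c : Fin (q + 1), ((Finset.univ.filter fun a => f a = c).card.choose 2)))
      = t ^ (S.card.choose 2) * Wgen t q {a // a ∈ Sᶜ} := by
    intro S
    have hmem : ∀ (f : Fin m → Fin (q + 1)),
        Finset.univ.filter (fun a => f a = Fin.last q) = S →
        ∀ a : Fin m, (f a = Fin.last q ↔ a ∈ S) := by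
      intro f hf a
      rw [← hf]
      simp
    -- the equivalence
    set E : {f : Fin m → Fin (q + 1) //
        Finset.univ.filter (fun a => f a = Fin.last q) = S} → ({a // a ∈ Sᶜ} → Fin q) :=
      fun fp a => Fin.castPred (fp.val a.val)
        (by
          have := (hmem fp.val fp.property a.val)
          intro hc
          exact (Finset.mem_compl.mp a.property) (this.mp hc)) with hE
    set I : ({a // a ∈ Sᶜ} → Fin q) → {f : Fin m → Fin (q + 1) //
        Finset.univ.filter (fun a => f a = Fin.last q) = S} :=
      fun g => ⟨fun a => if h : a ∈ S then Fin.last q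
        else Fin.castSucc (g ⟨a, Finset.mem_compl.mpr h⟩), by
          ext a
          simp only [Finset.mem_filter, Finset.mem_univ, true_and]
          by_cases h : a ∈ S
          · simp [h]
          · simp only [h, dif_neg, not_false_iff, iff_false]
            exact (Fin.castSucc_lt_last _).ne⟩ with hI
    have hEquiv : Function.LeftInverse I E ∧ Function.RightInverse I E := by
      constructor
      · intro fp
        refine Subtype.ext ?_
        funext a
        simp only [hI, hE]
        by_cases h : a ∈ S
        · rw [dif_pos h]
          exact ((hmem fp.val fp.property a).mpr h).symm
        · rw [dif_neg h]
          exact Fin.castSucc_castPred _ _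
      · intro g
        funext a
        simp only [hI, hE]
        have h : a.val ∉ S := Finset.mem_compl.mp a.property
        rw [Fin.castPred_eq_iff_eq_castSucc, dif_neg h, Subtype.coe_eta]
    have hweight : ∀ fp : {f : Fin m → Fin (q + 1) //
        Finset.univ.filter (fun a => f a = Fin.last q) = S},
        (∑ c : Fin (q + 1), ((Finset.univ.filter fun a => fp.val a = c).card.choose 2))
        = S.card.choose 2
          + ∑ c : Fin q, ((Finset.univ.filter fun a : {a // a ∈ Sᶜ} => E fp a = c).card.choose 2) := by
      intro fp
      rw [Fin.sum_univ_castSucc]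
      rw [fp.property]
      rw [Nat.add_comm]
      congr 1
      refine Finset.sum_congr rfl fun c _ => ?_
      congr 1
      refine (Finset.card_bij (fun (a : {a // a ∈ Sᶜ}) _ => a.val) ?_ ?_ ?_).symm
      · intro a ha
        simp only [Finset.mem_filter, Finset.mem_univ, true_and, hE] at ha ⊢
        rw [← ha, Fin.castSucc_castPred]
      · intro a _ b _ h
        exact Subtype.ext h
      · intro b hb
        simp only [Finset.mem_filter, Finset.mem_univ, true_and] at hb
        have hbS : b ∈ Sᶜ := by
          refine Finset.mem_compl.mpr fun hc => ?_
          have := (hmem fp.val fp.property b).mpr hc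
          rw [hb] at this
          exact absurd this (Fin.castSucc_lt_last _).ne
        refine ⟨⟨b, hbS⟩, ?_, rfl⟩
        simp only [Finset.mem_filter, Finset.mem_univ, true_and, hE]
        rw [Fin.castPred_eq_iff_eq_castSucc]
        exact hb
    -- convert the filtered sum to a sum over the subtype, then transport along E
    rw [Finset.sum_subtype (Finset.univ.filter
        (fun f : Fin m → Fin (q + 1) => Finset.univ.filter (fun a => f a = Fin.last q) = S))
        (p := fun f => Finset.univ.filter (fun a => f a = Fin.last q) = S)
        (by intro f; simp)]
    rw [Finset.sum_congr rfl (fun fp _ => by rw [hweight fp, pow_add])]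
    rw [← Finset.mul_sum]
    congr 1
    rw [Wgen]
    exact Fintype.sum_equiv ⟨E, I, hEquiv.1, hEquiv.2⟩ _ _ (fun fp => rfl)
  have hS' : ∀ S : Finset (Fin m),
      Wgen t q {a // a ∈ Sᶜ} = Wgen t q (Fin (m - S.card)) := by
    intro S
    refine Wgen_congr (Fintype.equivFinOfCardEq ?_)
    simp [Finset.card_compl]
  rw [h0, Finset.sum_congr rfl fun S _ => (hS S).trans (by rw [hS' S])]
  rw [← Finset.sum_fiberwise_of_maps_to (g := fun S : Finset (Fin m) => S.card)
    (t := Finset.range (m + 1))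
    (fun S _ => Finset.mem_range.mpr (Nat.lt_succ_of_le (by
      simpa using Finset.card_le_univ S))) _]
  refine Finset.sum_congr rfl fun j hj => ?_
  have hfil : Finset.univ.filter (fun S : Finset (Fin m) => S.card = j)
      = Finset.powersetCard j Finset.univ := by
    ext S
    simp [Finset.mem_powersetCard]
  calc (∑ S ∈ Finset.univ.filter (fun S : Finset (Fin m) => S.card = j),
        t ^ (S.card.choose 2) * Wgen t q (Fin (m - S.card)))
      = ∑ _S ∈ Finset.univ.filter (fun S : Finset (Fin m) => S.card = j),
        t ^ (j.choose 2) * Wgen t q (Fin (m - j)) := by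
        refine Finset.sum_congr rfl fun S hS0 => ?_
        rw [(Finset.mem_filter.mp hS0).2]
    _ = ((Finset.univ.filter (fun S : Finset (Fin m) => S.card = j)).card : ℝ)
        * (t ^ (j.choose 2) * Wgen t q (Fin (m - j))) := by
        rw [Finset.sum_const, nsmul_eq_mul]
    _ = (m.choose j : ℝ) * t ^ (j.choose 2) * Wgen t q (Fin (m - j)) := by
        rw [hfil, Finset.card_powersetCard, Finset.card_univ, Fintype.card_fin, mul_assoc]

end FlowAux

namespace FlowAux

open Finset

lemma mono_card (n q : ℕ) (f : Fin n → Fin q) :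
    (mono f).card = ∑ c : Fin q, ((Finset.univ.filter fun a => f a = c).card.choose 2) := by
  classical
  rw [Finset.card_eq_sum_card_fiberwise
    (f := fun e : KEdge n => f e.val.1) (t := Finset.univ) (fun e _ => Finset.mem_univ _)]
  refine Finset.sum_congr rfl fun c _ => ?_
  set S := Finset.univ.filter fun a => f a = c with hSdef
  rw [← card_lt_pairs S]
  refine Finset.card_bij (fun e _ => e.val) ?_ ?_ ?_
  · intro e he
    simp only [mono, Finset.mem_filter, Finset.mem_univ, true_and] at he
    simp only [Finset.mem_filter, Finset.mem_product, hSdef, Finset.mem_univ, true_and]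
    exact ⟨⟨he.2, he.1 ▸ he.2⟩, e.property⟩
  · intro a _ b _ h
    exact Subtype.ext h
  · intro p hp
    simp only [Finset.mem_filter, Finset.mem_product, hSdef, Finset.mem_univ, true_and] at hp
    refine ⟨⟨p, hp.2⟩, ?_, rfl⟩
    exact Finset.mem_filter.mpr
      ⟨Finset.mem_filter.mpr ⟨Finset.mem_univ _, hp.1.1.trans hp.1.2.symm⟩, hp.1.1⟩

lemma sum_mono_eq_Wgen (n q : ℕ) (x : ℝ) :
    ∑ f : Fin n → Fin q, (1 - x) ^ (mono f).card = Wgen (1 - x) q (Fin n) := by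
  rw [Wgen]
  exact Finset.sum_congr rfl fun f _ => by rw [mono_card]

end FlowAux

namespace FlowAux

open Finset

/-- Denominator of the Faà di Bruno coefficient. -/
def Dnat (m : Multiset ℕ) : ℕ :=
  ∏ i ∈ m.toFinset, (Nat.factorial i ^ m.count i * Nat.factorial (m.count i))

lemma Dnat_pos (m : Multiset ℕ) : 0 < Dnat m :=
  Finset.prod_pos fun i _ => Nat.mul_pos (Nat.pow_pos (Nat.factorial_pos i))
    (Nat.factorial_pos _)

lemma Dnat_eq_prod {m : Multiset ℕ} {F : Finset ℕ} (hF : m.toFinset ⊆ F) :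
    Dnat m = ∏ i ∈ F, (Nat.factorial i ^ m.count i * Nat.factorial (m.count i)) := by
  rw [Dnat]
  refine Finset.prod_subset hF ?_
  intro i _ hi
  have : m.count i = 0 := by
    rw [Multiset.count_eq_zero]
    exact fun hc => hi (Multiset.mem_toFinset.mpr hc)
  rw [this]
  simp

lemma Dnat_erase {m : Multiset ℕ} {j : ℕ} (hj : j ∈ m) :
    Dnat m = (Nat.factorial j * m.count j) * Dnat (m.erase j) := by
  classical
  have hsub : (m.erase j).toFinset ⊆ m.toFinset := by
    intro i hi
    exact Multiset.mem_toFinset.mpr (Multiset.mem_of_mem_erase (Multiset.mem_toFinset.mp hi))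
  have hjT : j ∈ m.toFinset := Multiset.mem_toFinset.mpr hj
  obtain ⟨d, hd⟩ : ∃ d, m.count j = d + 1 :=
    ⟨m.count j - 1, by have := Multiset.count_pos.mpr hj; omega⟩
  rw [Dnat_eq_prod (le_refl m.toFinset), Dnat_eq_prod hsub]
  rw [← Finset.mul_prod_erase _ _ hjT, ← Finset.mul_prod_erase _ _ hjT]
  have hoff : ∀ i ∈ m.toFinset.erase j,
      Nat.factorial i ^ m.count i * Nat.factorial (m.count i)
      = Nat.factorial i ^ (m.erase j).count i * Nat.factorial ((m.erase j).count i) := by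
    intro i hi
    rw [Multiset.count_erase_of_ne (Finset.mem_erase.mp hi).1]
  rw [Finset.prod_congr rfl hoff]
  rw [Multiset.count_erase_self, hd]
  simp only [Nat.add_sub_cancel]
  rw [pow_succ, Nat.factorial_succ]
  try ring

lemma Dnat_filter {m : Multiset ℕ} (j : ℕ) :
    Dnat m = (Nat.factorial j ^ m.count j * Nat.factorial (m.count j))
      * Dnat (m.filter (· ≠ j)) := by
  classical
  by_cases hj : j ∈ m
  case neg =>
    have h0 : m.count j = 0 := by rwa [Multiset.count_eq_zero]
    have hfe : m.filter (· ≠ j) = m := by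
      rw [Multiset.filter_eq_self]
      intro a ha
      exact fun h => hj (h ▸ ha)
    rw [h0, hfe]
    simp
  case pos =>
    have hsub : (m.filter (· ≠ j)).toFinset ⊆ m.toFinset := by
      intro i hi
      exact Multiset.mem_toFinset.mpr
        (Multiset.mem_of_mem_filter (Multiset.mem_toFinset.mp hi))
    have hjT : j ∈ m.toFinset := Multiset.mem_toFinset.mpr hj
    have hcnt : ∀ i, (m.filter (· ≠ j)).count i = if i ≠ j then m.count i else 0 := by
      intro i
      rw [Multiset.count_filter]
    rw [Dnat_eq_prod (le_refl m.toFinset), Dnat_eq_prod hsub]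
    rw [← Finset.mul_prod_erase _ _ hjT, ← Finset.mul_prod_erase _ _ hjT]
    have hoff : ∀ i ∈ m.toFinset.erase j,
        Nat.factorial i ^ m.count i * Nat.factorial (m.count i)
        = Nat.factorial i ^ (m.filter (· ≠ j)).count i
          * Nat.factorial ((m.filter (· ≠ j)).count i) := by
      intro i hi
      rw [hcnt i, if_pos (Finset.mem_erase.mp hi).1]
    rw [Finset.prod_congr rfl hoff, hcnt j, if_neg (by simp)]
    simp only [pow_zero, Nat.factorial_zero, one_mul, mul_one]

/-- choose divisibility key -/
lemma choose_key {j : ℕ} (hj : 0 < j) (c : ℕ) :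
    ∃ Cn, (j * (c + 1)).choose j = (c + 1) * Cn := by
  obtain ⟨j', rfl⟩ : ∃ j', j = j' + 1 := ⟨j - 1, by omega⟩
  refine ⟨(j' * (c + 1) + c).choose j', ?_⟩
  have h1 := Nat.add_one_mul_choose_eq (j' * (c + 1) + c) j'
  have h2 : j' * (c + 1) + c + 1 = (j' + 1) * (c + 1) := by
    ring
  rw [h2] at h1
  -- h1 : (j'+1)*(c+1) * choose (j'*(c+1)+c) j' = choose ((j'+1)*(c+1)) (j'+1) * (j'+1)
  have h6 : (j' + 1) * ((c + 1) * (j' * (c + 1) + c).choose j')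
      = (j' + 1) * (((j' + 1) * (c + 1)).choose (j' + 1)) := by
    rw [mul_comm (((j' + 1) * (c + 1)).choose (j' + 1)) (j' + 1)] at h1
    rw [← h1]
    ring
  exact (Nat.eq_of_mul_eq_mul_left (Nat.succ_pos j') h6).symm

/-- `(j!)^c * c! ∣ (j*c)!` -/
lemma factorial_pow_mul_dvd {j : ℕ} (hj : 0 < j) (c : ℕ) :
    Nat.factorial j ^ c * Nat.factorial c ∣ Nat.factorial (j * c) := by
  induction c with
  | zero => simp
  | succ c ih =>
    obtain ⟨Cn, hkey⟩ := choose_key hj c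
    have hfac : Nat.factorial (j * (c + 1))
        = ((c + 1) * Cn) * Nat.factorial j * Nat.factorial (j * c) := by
      have hle : j ≤ j * (c + 1) := Nat.le_mul_of_pos_right _ (Nat.succ_pos c)
      have h4 := Nat.choose_mul_factorial_mul_factorial hle
      have h5 : j * (c + 1) - j = j * c := by rw [Nat.mul_succ]; omega
      rw [h5] at h4
      rw [← h4, hkey]
    calc Nat.factorial j ^ (c + 1) * Nat.factorial (c + 1)
        = (Nat.factorial j ^ c * Nat.factorial c) * (Nat.factorial j * (c + 1)) := by
          rw [pow_succ, Nat.factorial_succ]; ring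
      _ ∣ Nat.factorial (j * c) * (Nat.factorial j * (c + 1)) :=
          mul_dvd_mul_right ih _
      _ ∣ Nat.factorial (j * (c + 1)) := by
          rw [hfac]
          exact ⟨Cn, by ring⟩

lemma Dnat_dvd (m : Multiset ℕ) (hpos : ∀ i ∈ m, 0 < i) : Dnat m ∣ Nat.factorial m.sum := by
  induction m using Multiset.strongInductionOn with
  | _ m ih =>
  rcases Multiset.empty_or_exists_mem m with rfl | ⟨j, hj⟩
  · simp [Dnat]
  · have hjpos : 0 < j := hpos j hj
    set c := m.count j with hc
    set m' := m.filter (· ≠ j) with hm'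
    have hsplit : Dnat m = (Nat.factorial j ^ c * Nat.factorial c) * Dnat m' := Dnat_filter j
    have hsum : m.sum = j * c + m'.sum := by
      have hadd := Multiset.filter_add_not (· = j) m
      have heqf : m.filter (· = j) = Multiset.replicate c j := Multiset.filter_eq' m j
      have : (m.filter (· = j)).sum + (m.filter (fun a => ¬ a = j)).sum = m.sum := by
        rw [← Multiset.sum_add, hadd]
      rw [heqf, Multiset.sum_replicate, smul_eq_mul] at this
      have hfeq : m.filter (fun a => ¬ a = j) = m' := by
        rw [hm']
      rw [hfeq] at this
      rw [Nat.mul_comm j c]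
      omega
    have hlt : m' < m := by
      refine lt_of_le_of_ne (Multiset.filter_le _ m) fun h => ?_
      have : j ∈ m' := h.symm ▸ hj
      rw [hm', Multiset.mem_filter] at this
      exact this.2 rfl
    have ihm' : Dnat m' ∣ Nat.factorial m'.sum :=
      ih m' hlt fun i hi => hpos i (Multiset.mem_of_mem_filter hi)
    rw [hsplit, hsum]
    calc (Nat.factorial j ^ c * Nat.factorial c) * Dnat m'
        ∣ Nat.factorial (j * c) * Nat.factorial m'.sum :=
          mul_dvd_mul (factorial_pow_mul_dvd hjpos c) ihm'
      _ ∣ Nat.factorial (j * c + m'.sum) :=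
          Nat.factorial_mul_factorial_dvd_factorial_add _ _

end FlowAux

namespace FlowAux

open Finset

def sM (m : Multiset ℕ) : ℕ := (m.map fun a => a.choose 2).sum

noncomputable def fQ (n : ℕ) (m : Multiset ℕ) : ℝ :=
  (Nat.factorial n : ℝ) / (Dnat m : ℝ)

noncomputable def R (t y : ℝ) (n : ℕ) : ℝ :=
  ∑ lam : n.Partition, fQ n lam.parts * t ^ sM lam.parts *
    ∏ i ∈ Finset.range (Multiset.card lam.parts), (y - (i : ℝ))

lemma parts_eq_zero (lam : (0 : ℕ).Partition) : lam.parts = 0 := by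
  refine Multiset.eq_zero_of_forall_notMem fun i hi => ?_
  have h1 := lam.parts_pos hi
  have h2 : i = 0 := Multiset.sum_eq_zero_iff.mp lam.parts_sum i hi
  omega

lemma R_base_n (t y : ℝ) : R t y 0 = 1 := by
  rw [R]
  rw [Finset.univ_unique, Finset.sum_singleton]
  have hp : (default : (0:ℕ).Partition).parts = 0 := parts_eq_zero _
  rw [hp]
  simp [fQ, Dnat, sM]

lemma R_base_q (t : ℝ) {n : ℕ} (hn : 0 < n) : R t 0 n = 0 := by
  rw [R]
  refine Finset.sum_eq_zero fun lam _ => ?_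
  have hne : lam.parts ≠ 0 := fun h0 => by
    have := lam.parts_sum
    rw [h0] at this
    simp at this
    omega
  have hcard : 0 < Multiset.card lam.parts := Multiset.card_pos.mpr hne
  have hz : ∏ i ∈ Finset.range (Multiset.card lam.parts), ((0:ℝ) - (i : ℝ)) = 0 :=
    Finset.prod_eq_zero (Finset.mem_range.mpr hcard) (by norm_num)
  rw [hz, mul_zero]

def erasePart {n : ℕ} (lam : n.Partition) (j : ℕ) (hj : j ∈ lam.parts) :
    (n - j).Partition where
  parts := lam.parts.erase j
  parts_pos := fun hi => lam.parts_pos (Multiset.mem_of_mem_erase hi)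
  parts_sum := by
    have h2 : j + (lam.parts.erase j).sum = n := by
      rw [← Multiset.sum_cons, Multiset.cons_erase hj, lam.parts_sum]
    omega

def consPart {n : ℕ} (j : ℕ) (hj1 : 0 < j) (hjn : j ≤ n) (mu : (n - j).Partition) :
    n.Partition where
  parts := j ::ₘ mu.parts
  parts_pos := fun hi => by
    rcases Multiset.mem_cons.mp hi with rfl | h
    · exact hj1
    · exact mu.parts_pos h
  parts_sum := by rw [Multiset.sum_cons, mu.parts_sum]; omega

lemma mem_le_n {n : ℕ} (lam : n.Partition) {j : ℕ} (hj : j ∈ lam.parts) : j ≤ n :=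
  lam.parts_sum ▸ Multiset.single_le_sum (fun x _ => Nat.zero_le x) j hj

lemma sM_erase {n : ℕ} (lam : n.Partition) {j : ℕ} (hj : j ∈ lam.parts) :
    sM lam.parts = j.choose 2 + sM (lam.parts.erase j) := by
  conv_lhs => rw [← Multiset.cons_erase hj]
  rw [sM, sM, Multiset.map_cons, Multiset.sum_cons]

lemma fq_count {n : ℕ} (lam : n.Partition) {j : ℕ} (hj : j ∈ lam.parts) :
    (n.choose j : ℝ) * fQ (n - j) (lam.parts.erase j)
      = (lam.parts.count j : ℝ) * fQ n lam.parts := by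
  have hjn : j ≤ n := mem_le_n lam hj
  have hD := Dnat_erase hj
  have hchoose := Nat.choose_mul_factorial_mul_factorial hjn
  have hcount : 0 < lam.parts.count j := Multiset.count_pos.mpr hj
  have hDr : (Dnat lam.parts : ℝ)
      = (Nat.factorial j : ℝ) * (lam.parts.count j : ℝ)
        * (Dnat (lam.parts.erase j) : ℝ) := by exact_mod_cast congrArg Nat.cast hD
  have hcr : (n.choose j : ℝ) * (Nat.factorial j : ℝ) * (Nat.factorial (n - j) : ℝ)
      = (Nat.factorial n : ℝ) := by exact_mod_cast congrArg Nat.cast hchoose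
  have h1 : (Nat.factorial j : ℝ) ≠ 0 := Nat.cast_ne_zero.mpr (Nat.factorial_ne_zero j)
  have h2 : (lam.parts.count j : ℝ) ≠ 0 := Nat.cast_ne_zero.mpr hcount.ne'
  have h3 : (Dnat (lam.parts.erase j) : ℝ) ≠ 0 :=
    Nat.cast_ne_zero.mpr (Dnat_pos _).ne'
  rw [fQ, fQ, hDr, ← hcr]
  field_simp

end FlowAux

namespace FlowAux

open Finset

lemma prod_shift (y : ℝ) (l : ℕ) :
    ∏ i ∈ Finset.range l, (y + 1 - (i : ℝ))
      = ∏ i ∈ Finset.range l, (y - (i : ℝ))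
        + (l : ℝ) * ∏ i ∈ Finset.range (l - 1), (y - (i : ℝ)) := by
  cases l with
  | zero => simp
  | succ k =>
    have h1 : ∏ i ∈ Finset.range (k + 1), (y + 1 - (i : ℝ))
        = (∏ i ∈ Finset.range k, (y - (i : ℝ))) * (y + 1) := by
      rw [Finset.prod_range_succ']
      congr 1
      · refine Finset.prod_congr rfl fun i _ => ?_
        push_cast
        ring
      · norm_num
    have h2 : ∏ i ∈ Finset.range (k + 1), (y - (i : ℝ))
        = (∏ i ∈ Finset.range k, (y - (i : ℝ))) * (y - (k : ℝ)) :=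
      Finset.prod_range_succ _ _
    rw [h1, h2]
    simp only [Nat.add_sub_cancel]
    push_cast
    ring

lemma claim1 {n : ℕ} (t y : ℝ) (lam : n.Partition) :
    (∑ j ∈ lam.parts.toFinset,
      (n.choose j : ℝ) * t ^ (j.choose 2)
        * (fQ (n - j) (lam.parts.erase j) * t ^ (sM (lam.parts.erase j))
          * ∏ i ∈ Finset.range (Multiset.card lam.parts - 1), (y - (i : ℝ))))
    = fQ n lam.parts * t ^ sM lam.parts * ((Multiset.card lam.parts : ℝ)
        * ∏ i ∈ Finset.range (Multiset.card lam.parts - 1), (y - (i : ℝ))) := by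
  have hterm : ∀ j ∈ lam.parts.toFinset,
      (n.choose j : ℝ) * t ^ (j.choose 2)
        * (fQ (n - j) (lam.parts.erase j) * t ^ (sM (lam.parts.erase j))
          * ∏ i ∈ Finset.range (Multiset.card lam.parts - 1), (y - (i : ℝ)))
      = (lam.parts.count j : ℝ) * (fQ n lam.parts * t ^ sM lam.parts
          * ∏ i ∈ Finset.range (Multiset.card lam.parts - 1), (y - (i : ℝ))) := by
    intro j hjT
    have hj : j ∈ lam.parts := Multiset.mem_toFinset.mp hjT
    have hcnt := fq_count lam hj
    have hsM := sM_erase lam hj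
    calc (n.choose j : ℝ) * t ^ (j.choose 2)
        * (fQ (n - j) (lam.parts.erase j) * t ^ (sM (lam.parts.erase j))
          * ∏ i ∈ Finset.range (Multiset.card lam.parts - 1), (y - (i : ℝ)))
        = ((n.choose j : ℝ) * fQ (n - j) (lam.parts.erase j))
          * (t ^ (j.choose 2) * t ^ (sM (lam.parts.erase j)))
          * ∏ i ∈ Finset.range (Multiset.card lam.parts - 1), (y - (i : ℝ)) := by ring
      _ = ((lam.parts.count j : ℝ) * fQ n lam.parts) * t ^ (sM lam.parts)
          * ∏ i ∈ Finset.range (Multiset.card lam.parts - 1), (y - (i : ℝ)) := by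
          rw [hcnt, ← pow_add, ← hsM]
      _ = (lam.parts.count j : ℝ) * (fQ n lam.parts * t ^ sM lam.parts
          * ∏ i ∈ Finset.range (Multiset.card lam.parts - 1), (y - (i : ℝ))) := by ring
  rw [Finset.sum_congr rfl hterm, ← Finset.sum_mul]
  have hcards : (∑ j ∈ lam.parts.toFinset, (lam.parts.count j : ℝ))
      = (Multiset.card lam.parts : ℝ) := by
    rw [← Nat.cast_sum]
    exact_mod_cast congrArg Nat.cast (Multiset.toFinset_sum_count_eq lam.parts)
  rw [hcards]
  ring

lemma claim2 {n : ℕ} (t y : ℝ) :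
    (∑ j ∈ Finset.Icc 1 n, ∑ mu : (n - j).Partition,
      (n.choose j : ℝ) * t ^ (j.choose 2)
        * (fQ (n - j) mu.parts * t ^ (sM mu.parts)
          * ∏ i ∈ Finset.range (Multiset.card mu.parts), (y - (i : ℝ))))
    = ∑ lam : n.Partition, ∑ j ∈ lam.parts.toFinset,
      (n.choose j : ℝ) * t ^ (j.choose 2)
        * (fQ (n - j) (lam.parts.erase j) * t ^ (sM (lam.parts.erase j))
          * ∏ i ∈ Finset.range (Multiset.card lam.parts - 1), (y - (i : ℝ))) := by
  classical
  rw [Finset.sum_sigma', Finset.sum_sigma']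
  refine Finset.sum_bij'
    (i := fun (p : Σ j : ℕ, (n - j).Partition) (hp) =>
      (⟨consPart p.1
        (by
          have := (Finset.mem_sigma.mp hp).1
          exact (Finset.mem_Icc.mp this).1)
        (by
          have := (Finset.mem_sigma.mp hp).1
          exact (Finset.mem_Icc.mp this).2) p.2, p.1⟩ : Σ lam : n.Partition, ℕ))
    (j := fun (b : Σ lam : n.Partition, ℕ) (hb) =>
      (⟨b.2, erasePart b.1 b.2
        (by
          have := (Finset.mem_sigma.mp hb).2
          exact Multiset.mem_toFinset.mp this)⟩ : Σ j : ℕ, (n - j).Partition))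
    ?_ ?_ ?_ ?_ ?_
  · intro p hp
    rw [Finset.mem_sigma]
    refine ⟨Finset.mem_univ _, ?_⟩
    rw [Multiset.mem_toFinset]
    exact Multiset.mem_cons_self _ _
  · intro b hb
    rw [Finset.mem_sigma]
    have hmem : b.2 ∈ b.1.parts := Multiset.mem_toFinset.mp (Finset.mem_sigma.mp hb).2
    refine ⟨Finset.mem_Icc.mpr ⟨b.1.parts_pos hmem, mem_le_n b.1 hmem⟩, Finset.mem_univ _⟩
  · intro p hp
    rcases p with ⟨j0, mu⟩
    exact congrArg (Sigma.mk j0) (Nat.Partition.ext (Multiset.erase_cons_head j0 mu.parts))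
  · intro b hb
    rcases b with ⟨lam, j0⟩
    have hmem : j0 ∈ lam.parts := Multiset.mem_toFinset.mp (Finset.mem_sigma.mp hb).2
    exact congrArg (fun l => (⟨l, j0⟩ : Σ lam : n.Partition, ℕ))
      (Nat.Partition.ext (Multiset.cons_erase hmem))
  · intro p hp
    rcases p with ⟨j0, mu⟩
    simp only [consPart, Multiset.erase_cons_head, Multiset.card_cons, Nat.add_sub_cancel]

lemma R_succ (t y : ℝ) (n : ℕ) :
    R t (y + 1) n = ∑ j ∈ Finset.range (n + 1),
      (n.choose j : ℝ) * t ^ (j.choose 2) * R t y (n - j) := by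
  classical
  rw [Finset.sum_range_succ']
  have hzero : (n.choose 0 : ℝ) * t ^ ((0:ℕ).choose 2) * R t y (n - 0) = R t y n := by
    simp
  rw [hzero]
  have hlhs : R t (y + 1) n = R t y n + ∑ lam : n.Partition,
      fQ n lam.parts * t ^ sM lam.parts * ((Multiset.card lam.parts : ℝ)
        * ∏ i ∈ Finset.range (Multiset.card lam.parts - 1), (y - (i : ℝ))) := by
    rw [R, R, ← Finset.sum_add_distrib]
    refine Finset.sum_congr rfl fun lam _ => ?_
    rw [prod_shift y (Multiset.card lam.parts)]
    ring
  rw [hlhs, add_comm]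
  congr 1
  symm
  -- now the partition bijection
  have hIcc : (Finset.range n).image (· + 1) = Finset.Icc 1 n := by
    ext a
    simp only [Finset.mem_image, Finset.mem_range, Finset.mem_Icc]
    constructor
    · rintro ⟨b, hb, rfl⟩; omega
    · intro ⟨h1, h2⟩; exact ⟨a - 1, by omega, by omega⟩
  calc (∑ j ∈ Finset.range n, (n.choose (j+1) : ℝ) * t ^ ((j+1).choose 2) * R t y (n - (j+1)))
      = ∑ j ∈ Finset.Icc 1 n, (n.choose j : ℝ) * t ^ (j.choose 2) * R t y (n - j) := by
        rw [← hIcc, Finset.sum_image (by intro a _ b _ h; simp only at h; omega)]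
    _ = ∑ j ∈ Finset.Icc 1 n, ∑ mu : (n - j).Partition,
        (n.choose j : ℝ) * t ^ (j.choose 2)
          * (fQ (n - j) mu.parts * t ^ (sM mu.parts)
            * ∏ i ∈ Finset.range (Multiset.card mu.parts), (y - (i : ℝ))) := by
        refine Finset.sum_congr rfl fun j _ => ?_
        rw [R, Finset.mul_sum]
    _ = ∑ lam : n.Partition, ∑ j ∈ lam.parts.toFinset,
        (n.choose j : ℝ) * t ^ (j.choose 2)
          * (fQ (n - j) (lam.parts.erase j) * t ^ (sM (lam.parts.erase j))
            * ∏ i ∈ Finset.range (Multiset.card lam.parts - 1), (y - (i : ℝ))) := claim2 t y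
    _ = ∑ lam : n.Partition, fQ n lam.parts * t ^ sM lam.parts
        * ((Multiset.card lam.parts : ℝ)
          * ∏ i ∈ Finset.range (Multiset.card lam.parts - 1), (y - (i : ℝ))) :=
        Finset.sum_congr rfl fun lam _ => claim1 t y lam
  

end FlowAux

namespace FlowAux

open Finset

lemma W_eq_R (t : ℝ) : ∀ (q n : ℕ), Wgen t q (Fin n) = R t (q : ℝ) n := by
  intro q
  induction q with
  | zero =>
    intro n
    rcases Nat.eq_zero_or_pos n with rfl | h
    · rw [Wgen_zero_left, Nat.cast_zero, R_base_n]
    · rw [Wgen_zero_pos t h, Nat.cast_zero, R_base_q t h]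
  | succ q ih =>
    intro n
    rw [Wgen_succ]
    have hc : ((q + 1 : ℕ) : ℝ) = (q : ℝ) + 1 := by push_cast; ring
    rw [hc, R_succ]
    exact Finset.sum_congr rfl fun j _ => by rw [ih]

lemma P_eq_Q (n : ℕ) (x : ℝ) :
    (∑ B : Finset (KEdge n), Polynomial.C ((-x) ^ B.card) * Polynomial.X ^ (ncc n B))
    = ∑ lam : n.Partition, Polynomial.C (fQ n lam.parts * (1 - x) ^ sM lam.parts) *
        ∏ i ∈ Finset.range (Multiset.card lam.parts),
          (Polynomial.X - Polynomial.C (i : ℝ)) := by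
  apply Polynomial.eq_of_infinite_eval_eq
  apply Set.infinite_of_injective_forall_mem (f := fun q : ℕ => (q : ℝ))
    (hi := Nat.cast_injective)
  intro q
  simp only [Set.mem_setOf_eq]
  have hLHS : Polynomial.eval (q : ℝ)
      (∑ B : Finset (KEdge n), Polynomial.C ((-x) ^ B.card) * Polynomial.X ^ (ncc n B))
      = ∑ B : Finset (KEdge n), (-x) ^ B.card * (q : ℝ) ^ (ncc n B) := by
    rw [Polynomial.eval_finset_sum]
    refine Finset.sum_congr rfl fun B _ => ?_
    simp
  have hRHS : Polynomial.eval (q : ℝ)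
      (∑ lam : n.Partition, Polynomial.C (fQ n lam.parts * (1 - x) ^ sM lam.parts) *
        ∏ i ∈ Finset.range (Multiset.card lam.parts),
          (Polynomial.X - Polynomial.C (i : ℝ)))
      = R (1 - x) (q : ℝ) n := by
    rw [Polynomial.eval_finset_sum, R]
    refine Finset.sum_congr rfl fun lam _ => ?_
    rw [Polynomial.eval_mul, Polynomial.eval_C, Polynomial.eval_prod]
    congr 1
    refine Finset.prod_congr rfl fun i _ => ?_
    simp
  rw [hLHS, hRHS, sum_ncc_eq n q x, sum_mono_eq_Wgen n q x, W_eq_R]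

lemma sum_eval (n : ℕ) (x : ℝ) :
    (∑ B : Finset (KEdge n), (-x) ^ B.card * x ^ (ncc n B))
    = ∑ lam : n.Partition, fQ n lam.parts * (1 - x) ^ sM lam.parts *
        ∏ i ∈ Finset.range (Multiset.card lam.parts), (x - (i : ℝ)) := by
  have h := congrArg (Polynomial.eval x) (P_eq_Q n x)
  rw [Polynomial.eval_finset_sum, Polynomial.eval_finset_sum] at h
  calc (∑ B : Finset (KEdge n), (-x) ^ B.card * x ^ (ncc n B))
      = ∑ B : Finset (KEdge n), Polynomial.eval x
          (Polynomial.C ((-x) ^ B.card) * Polynomial.X ^ (ncc n B)) := by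
        refine Finset.sum_congr rfl fun B _ => ?_
        simp
    _ = ∑ lam : n.Partition, Polynomial.eval x
          (Polynomial.C (fQ n lam.parts * (1 - x) ^ sM lam.parts) *
            ∏ i ∈ Finset.range (Multiset.card lam.parts),
              (Polynomial.X - Polynomial.C (i : ℝ))) := h
    _ = ∑ lam : n.Partition, fQ n lam.parts * (1 - x) ^ sM lam.parts *
          ∏ i ∈ Finset.range (Multiset.card lam.parts), (x - (i : ℝ)) := by
        refine Finset.sum_congr rfl fun lam _ => ?_
        rw [Polynomial.eval_mul, Polynomial.eval_C, Polynomial.eval_prod]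
        congr 1
        refine Finset.prod_congr rfl fun i _ => ?_
        simp

end FlowAux

open FlowAux in
/-- The flow polynomial of the complete graph `K_n` as a sum over the integer
partitions `λ` of `n`:
`F_{K_n}(x) = ((-1)^{n(n-1)/2} / x^n) ∑_λ f(λ) (1-x)^{s(λ)} x(x-1)⋯(x-ℓ(λ)+1)`. -/
theorem flowPoly_completeGraph (n : ℕ) (hn : 0 < n) (x : ℝ) (hx : x ≠ 0) :
    (flowPolyKn n).eval x =
      ((-1 : ℝ) ^ (n * (n - 1) / 2) / x ^ n) *
        ∑ lam : n.Partition, (faaDiBruno n lam : ℝ) * (1 - x) ^ partS n lam *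
          ∏ j ∈ Finset.range lam.parts.card, (x - (j : ℝ)) := by
  have hfaa : ∀ lam : n.Partition, (faaDiBruno n lam : ℝ) = fQ n lam.parts := by
    intro lam
    have hdvd : Dnat lam.parts ∣ Nat.factorial n := by
      have := Dnat_dvd lam.parts (fun i hi => lam.parts_pos hi)
      rwa [lam.parts_sum] at this
    have hne : (Dnat lam.parts : ℝ) ≠ 0 := Nat.cast_ne_zero.mpr (Dnat_pos _).ne'
    rw [fQ]
    rw [show faaDiBruno n lam = Nat.factorial n / Dnat lam.parts from rfl]
    rw [Nat.cast_div hdvd hne]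
  have hpartS : ∀ lam : n.Partition, partS n lam = sM lam.parts := by
    intro lam
    rw [partS, sM]
    congr 1
    refine Multiset.map_congr rfl fun a _ => ?_
    rw [Nat.choose_two_right]
  have hsum : (∑ lam : n.Partition, (faaDiBruno n lam : ℝ) * (1 - x) ^ partS n lam *
        ∏ j ∈ Finset.range lam.parts.card, (x - (j : ℝ)))
      = ∑ lam : n.Partition, fQ n lam.parts * (1 - x) ^ sM lam.parts *
        ∏ i ∈ Finset.range (Multiset.card lam.parts), (x - (i : ℝ)) := by
    refine Finset.sum_congr rfl fun lam _ => ?_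
    rw [hfaa lam, hpartS lam]
  rw [hsum]
  have h1 := eval_flowPoly hn x
  rw [sum_eval n x] at h1
  have hxn : x ^ n ≠ 0 := pow_ne_zero _ hx
  have hE : Fintype.card (KEdge n) = n * (n - 1) / 2 := card_KEdge n
  rw [div_mul_eq_mul_div, eq_div_iff hxn, mul_comm _ (x ^ n), h1, hE]
end

section
/- For n > 2, let N = n(n−1)/2 and N' = (n−1)(n−2)/2. The coefficient of x^{N'−k} in the flow polynomial F_{K_n}(x) equals (−1)^k · C(N, k) for every k with 0 ≤ k ≤ n − 3; in particular F_{K_n} is monic of degree N'. -/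
open Finset

namespace KFlow

variable {n : ℕ}

/-- the edge between two distinct vertices -/
def eOf (a b : Fin n) (h : a ≠ b) : KEdge n := ⟨(a ⊓ b, a ⊔ b), min_lt_max.mpr h⟩

lemma eOf_symm (a b : Fin n) (h : a ≠ b) : eOf a b h = eOf b a h.symm := by
  apply Subtype.ext
  show (a ⊓ b, a ⊔ b) = (b ⊓ a, b ⊔ a)
  rw [inf_comm, sup_comm]

lemma eOf_endpoints {a b c d : Fin n} {h h'} (he : eOf a b h = eOf c d h') :
    (a = c ∧ b = d) ∨ (a = d ∧ b = c) := by
  have h1 : a ⊓ b = c ⊓ d := congrArg (fun e => (Subtype.val e).1) he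
  have h2 : a ⊔ b = c ⊔ d := congrArg (fun e => (Subtype.val e).2) he
  rcases le_total a b with hab | hab <;> rcases le_total c d with hcd | hcd <;>
    simp [inf_eq_left.mpr, sup_eq_right.mpr, inf_eq_right.mpr, sup_eq_left.mpr, hab, hcd] at h1 h2 <;>
    tauto

lemma adj_iff {A : Finset (KEdge n)} {i j : Fin n} (h : i ≠ j) :
    (graphOf n A).Adj i j ↔ eOf i j h ∈ A := by
  constructor
  · rintro ⟨e, he, heq | heq⟩
    · have hp := e.property
      rw [heq] at hp
      have : eOf i j h = e := Subtype.ext (by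
        simp [eOf, heq, inf_eq_left.mpr hp.le, sup_eq_right.mpr hp.le])
      rwa [this]
    · have hp := e.property
      rw [heq] at hp
      have : eOf i j h = e := Subtype.ext (by
        simp [eOf, heq, inf_eq_right.mpr hp.le, sup_eq_left.mpr hp.le])
      rwa [this]
  · intro hmem
    refine ⟨eOf i j h, hmem, ?_⟩
    rcases lt_or_gt_of_ne h with hlt | hlt
    · left; simp [eOf, inf_eq_left.mpr hlt.le, sup_eq_right.mpr hlt.le]
    · right; simp [eOf, inf_eq_right.mpr hlt.le, sup_eq_left.mpr hlt.le]

lemma adj_mem {A : Finset (KEdge n)} {i j : Fin n} (h : (graphOf n A).Adj i j) :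
    ∃ e ∈ A, (e.val = (i,j) ∨ e.val = (j,i)) := h

noncomputable def cc (A : Finset (KEdge n)) : ℕ :=
  Nat.card (graphOf n A).ConnectedComponent

lemma graphOf_mono {A B : Finset (KEdge n)} (h : A ⊆ B) : graphOf n A ≤ graphOf n B := by
  intro i j ⟨e, he, heq⟩
  exact ⟨e, h he, heq⟩

lemma cc_anti {A B : Finset (KEdge n)} (h : A ⊆ B) : cc B ≤ cc A := by
  have hle := graphOf_mono h
  exact Nat.card_le_card_of_surjective
    (SimpleGraph.ConnectedComponent.map (SimpleGraph.Hom.ofLE hle))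
    (fun C => C.ind fun v => ⟨(graphOf n A).connectedComponentMk v, rfl⟩)


lemma reach_insert {A : Finset (KEdge n)} {e : KEdge n} {x y : Fin n}
    (h : (graphOf n (insert e A)).Reachable x y) :
    (graphOf n A).Reachable x y ∨
      ((graphOf n A).Reachable x e.val.1 ∧ (graphOf n A).Reachable e.val.2 y) ∨
      ((graphOf n A).Reachable x e.val.2 ∧ (graphOf n A).Reachable e.val.1 y) := by
  obtain ⟨w⟩ := h
  induction w with
  | nil => exact Or.inl (SimpleGraph.Reachable.refl _)
  | cons h p ih =>
    rename_i a b c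
    obtain ⟨f, hf, heq⟩ := h
    rcases Finset.mem_insert.mp hf with rfl | hfA
    · rcases heq with heq | heq
      · have h1 : f.val.1 = a := by rw [heq]
        have h2 : f.val.2 = b := by rw [heq]
        rw [h1, h2] at ih ⊢
        rcases ih with h' | ⟨h', h''⟩ | ⟨h', h''⟩
        · exact Or.inr (Or.inl ⟨SimpleGraph.Reachable.refl _, h'⟩)
        · exact Or.inr (Or.inl ⟨SimpleGraph.Reachable.refl _, h''⟩)
        · exact Or.inl h''
      · have h1 : f.val.1 = b := by rw [heq]
        have h2 : f.val.2 = a := by rw [heq]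
        rw [h1, h2] at ih ⊢
        rcases ih with h' | ⟨h', h''⟩ | ⟨h', h''⟩
        · exact Or.inr (Or.inr ⟨SimpleGraph.Reachable.refl _, h'⟩)
        · exact Or.inl h''
        · exact Or.inr (Or.inr ⟨SimpleGraph.Reachable.refl _, h''⟩)
    · have hab : (graphOf n A).Reachable a b := SimpleGraph.Adj.reachable ⟨f, hfA, heq⟩
      rcases ih with h' | ⟨h', h''⟩ | ⟨h', h''⟩
      · exact Or.inl (hab.trans h')
      · exact Or.inr (Or.inl ⟨hab.trans h', h''⟩)
      · exact Or.inr (Or.inr ⟨hab.trans h', h''⟩)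



lemma cc_insert_le (A : Finset (KEdge n)) (e : KEdge n) : cc (insert e A) ≤ cc A :=
  cc_anti (Finset.subset_insert e A)

lemma cc_le_cc_insert (A : Finset (KEdge n)) (e : KEdge n) :
    cc A ≤ cc (insert e A) + 1 := by
  classical
  set G := graphOf n A with hG
  set G' := graphOf n (insert e A) with hG'
  have hkey : ∀ x y : Fin n, G'.Reachable x y →
      G.connectedComponentMk x = G.connectedComponentMk y ∨
      G.connectedComponentMk x = G.connectedComponentMk e.val.2 ∨
      G.connectedComponentMk y = G.connectedComponentMk e.val.2 := by
    intro x y hr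
    rcases reach_insert hr with h | ⟨ha, hb⟩ | ⟨ha, hb⟩
    · exact Or.inl (SimpleGraph.ConnectedComponent.sound h)
    · exact Or.inr (Or.inr (SimpleGraph.ConnectedComponent.sound hb.symm))
    · exact Or.inr (Or.inl (SimpleGraph.ConnectedComponent.sound ha))
  have f : G.ConnectedComponent → G'.ConnectedComponent :=
    SimpleGraph.ConnectedComponent.map
      (SimpleGraph.Hom.ofLE (graphOf_mono (Finset.subset_insert e A)))
  let g : G.ConnectedComponent → G'.ConnectedComponent ⊕ Unit := fun c =>
    if c = G.connectedComponentMk e.val.2 then Sum.inr ()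
    else Sum.inl (c.lift (fun v => G'.connectedComponentMk v)
      (fun _ _ p _ => SimpleGraph.ConnectedComponent.sound
        ((p.map (SimpleGraph.Hom.ofLE
          (graphOf_mono (Finset.subset_insert e A)))).reachable)))
  have hginj : Function.Injective g := by
    intro c1 c2 hg
    obtain ⟨x, rfl⟩ := c1.exists_rep
    obtain ⟨y, rfl⟩ := c2.exists_rep
    have hx : (Quot.mk _ x : G.ConnectedComponent) = G.connectedComponentMk x := rfl
    have hy : (Quot.mk _ y : G.ConnectedComponent) = G.connectedComponentMk y := rfl
    rw [hx, hy] at hg ⊢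
    by_cases h1 : G.connectedComponentMk x = G.connectedComponentMk e.val.2 <;>
        by_cases h2 : G.connectedComponentMk y = G.connectedComponentMk e.val.2
    · exact h1.trans h2.symm
    · simp only [g, if_pos h1, if_neg h2] at hg
      exact absurd hg (by simp)
    · simp only [g, if_neg h1, if_pos h2] at hg
      exact absurd hg (by simp)
    · simp only [g, if_neg h1, if_neg h2, Sum.inl.injEq] at hg
      have hr : G'.Reachable x y := SimpleGraph.ConnectedComponent.exact hg
      rcases hkey x y hr with h | h | h
      · exact h
      · exact absurd h h1
      · exact absurd h h2
  have hcard := Nat.card_le_card_of_injective g hginj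
  rw [Nat.card_sum] at hcard
  simpa [cc] using hcard

/-- components can drop by at most the number of added edges -/
lemma cc_union_le (A D : Finset (KEdge n)) : cc A ≤ cc (A ∪ D) + D.card := by
  classical
  induction D using Finset.induction_on with
  | empty => simpa using cc_anti (Finset.subset_union_left)
  | @insert e D he ih =>
    have h1 : A ∪ insert e D = insert e (A ∪ D) := by
      ext x; simp [Finset.mem_insert, or_left_comm, or_comm]
    calc cc A ≤ cc (A ∪ D) + D.card := ih
      _ ≤ (cc (insert e (A ∪ D)) + 1) + D.card := by
          exact Nat.add_le_add_right (cc_le_cc_insert _ _) _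
      _ = cc (A ∪ insert e D) + (insert e D).card := by
          rw [h1, Finset.card_insert_of_notMem he]; ring


lemma graphOf_empty : graphOf n (∅ : Finset (KEdge n)) = ⊥ := by
  ext i j
  simp [graphOf]

lemma cc_empty : cc (∅ : Finset (KEdge n)) = n := by
  unfold cc
  rw [graphOf_empty]
  have hbij : Function.Bijective ((⊥ : SimpleGraph (Fin n)).connectedComponentMk) := by
    constructor
    · intro a b hab
      exact SimpleGraph.reachable_bot.mp (SimpleGraph.ConnectedComponent.exact hab)
    · exact fun C => C.exists_rep
  rw [← Nat.card_eq_of_bijective _ hbij, Nat.card_eq_fintype_card, Fintype.card_fin]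

lemma preconnected_of_small_compl (hn : 2 < n) {B : Finset (KEdge n)}
    (hB : Bᶜ.card + 2 ≤ n) : (graphOf n B).Preconnected := by
  classical
  intro i j
  by_cases hij : i = j
  · subst hij; exact SimpleGraph.Reachable.refl _
  by_cases hadj : eOf i j hij ∈ B
  · exact ((adj_iff hij).mpr hadj).reachable
  have hcij : eOf i j hij ∈ Bᶜ := Finset.mem_compl.mpr hadj
  by_cases hex : ∃ k, ∃ (h1 : i ≠ k) (h2 : k ≠ j), eOf i k h1 ∈ B ∧ eOf k j h2 ∈ B
  · obtain ⟨k, h1, h2, hk1, hk2⟩ := hex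
    exact ((adj_iff h1).mpr hk1).reachable.trans ((adj_iff h2).mpr hk2).reachable
  · exfalso
    push_neg at hex
    set S : Finset (Fin n) := univ \ {i, j} with hS
    let f : Fin n → KEdge n := fun k =>
      if h1 : i ≠ k then
        if h2 : k ≠ j then
          (if eOf i k h1 ∈ B then eOf k j h2 else eOf i k h1)
        else eOf i j hij
      else eOf i j hij
    have hfk : ∀ (k : Fin n) (h1 : i ≠ k) (h2 : k ≠ j),
        (f k = eOf i k h1 ∧ eOf i k h1 ∉ B) ∨ (f k = eOf k j h2 ∧ eOf k j h2 ∉ B) := by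
      intro k h1 h2
      simp only [f, dif_pos h1, dif_pos h2]
      by_cases hm : eOf i k h1 ∈ B
      · exact Or.inr ⟨if_pos hm, hex k h1 h2 hm⟩
      · exact Or.inl ⟨if_neg hm, hm⟩
    have hmem : ∀ k ∈ S, i ≠ k ∧ k ≠ j := by
      intro k hk
      rw [hS] at hk
      simp only [Finset.mem_sdiff, Finset.mem_univ, Finset.mem_insert,
        Finset.mem_singleton, true_and] at hk
      push_neg at hk
      exact ⟨fun h => hk.1 h.symm, hk.2⟩
    have hmaps : ∀ k ∈ S, f k ∈ Bᶜ.erase (eOf i j hij) := by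
      intro k hk
      obtain ⟨h1, h2⟩ := hmem k hk
      rcases hfk k h1 h2 with ⟨hfeq, hnB⟩ | ⟨hfeq, hnB⟩
      · refine Finset.mem_erase.mpr ⟨?_, Finset.mem_compl.mpr (hfeq ▸ hnB)⟩
        rw [hfeq]
        intro hcon
        rcases eOf_endpoints hcon with ⟨_, hkj⟩ | ⟨hij', _⟩
        · exact h2 hkj
        · exact hij hij'
      · refine Finset.mem_erase.mpr ⟨?_, Finset.mem_compl.mpr (hfeq ▸ hnB)⟩
        rw [hfeq]
        intro hcon
        rcases eOf_endpoints hcon with ⟨hki, _⟩ | ⟨hkj, hji⟩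
        · exact h1 hki.symm
        · exact h2 hkj
    have hinj : Set.InjOn f S := by
      intro k hk k' hk' hff
      obtain ⟨h1, h2⟩ := hmem k (by simpa using hk)
      obtain ⟨h1', h2'⟩ := hmem k' (by simpa using hk')
      rcases hfk k h1 h2 with ⟨hfeq, _⟩ | ⟨hfeq, _⟩ <;>
        rcases hfk k' h1' h2' with ⟨hfeq', _⟩ | ⟨hfeq', _⟩ <;>
        rw [hfeq, hfeq'] at hff
      · rcases eOf_endpoints hff with ⟨_, hkk⟩ | ⟨hik, _⟩
        · exact hkk
        · exact absurd hik h1'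
      · rcases eOf_endpoints hff with ⟨hik', _⟩ | ⟨hijeq, _⟩
        · exact absurd hik' h1'
        · exact absurd hijeq hij
      · rcases eOf_endpoints hff with ⟨hki, _⟩ | ⟨hkk, _⟩
        · exact absurd hki.symm h1
        · exact hkk
      · rcases eOf_endpoints hff with ⟨hkk, _⟩ | ⟨hkj, _⟩
        · exact hkk
        · exact absurd hkj h2
    have hcard := Finset.card_le_card_of_injOn f hmaps hinj
    have hScard : S.card = n - 2 := by
      rw [hS, Finset.card_sdiff_of_subset (Finset.subset_univ _), Finset.card_univ, Fintype.card_fin,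
        Finset.card_insert_of_notMem (by simpa using hij), Finset.card_singleton]
    have hec : (Bᶜ.erase (eOf i j hij)).card = Bᶜ.card - 1 :=
      Finset.card_erase_of_mem hcij
    have hpos : 1 ≤ Bᶜ.card := Finset.card_pos.mpr ⟨_, hcij⟩
    omega

lemma cc_of_small_compl (hn : 2 < n) {B : Finset (KEdge n)}
    (hB : Bᶜ.card + 2 ≤ n) : cc B = 1 := by
  have hpre := preconnected_of_small_compl hn hB
  have : Subsingleton (graphOf n B).ConnectedComponent :=
    hpre.subsingleton_connectedComponent
  have hne : Nonempty (graphOf n B).ConnectedComponent :=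
    ⟨(graphOf n B).connectedComponentMk ⟨0, by omega⟩⟩
  unfold cc
  exact Nat.card_eq_one_iff_unique.mpr ⟨this, hne⟩

lemma cc_univ (hn : 2 < n) : cc (univ : Finset (KEdge n)) = 1 := by
  apply cc_of_small_compl hn
  simp
  omega


lemma multiset_sq_sum (s : Multiset ℕ) :
    (∀ x ∈ s, 1 ≤ x) →
    (s.map (fun x => x * x)).sum + (Multiset.card s - 1) * (2 * s.sum - Multiset.card s)
      ≤ s.sum * s.sum := by
  induction s using Multiset.induction_on with
  | empty => simp
  | cons a t ih =>
    intro hpos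
    have ha : 1 ≤ a := hpos a (Multiset.mem_cons_self a t)
    have ht : ∀ x ∈ t, 1 ≤ x := fun x hx => hpos x (Multiset.mem_cons_of_mem hx)
    have iht := ih ht
    have hcs : Multiset.card t ≤ t.sum := by
      calc Multiset.card t = (t.map (fun _ => 1)).sum := by simp
        _ ≤ (t.map id).sum := by
            apply Multiset.sum_map_le_sum_map
            intro x hx; exact ht x hx
        _ = t.sum := by simp
    simp only [Multiset.map_cons, Multiset.sum_cons, Multiset.card_cons]
    set Q := (t.map (fun x => x * x)).sum
    set T := t.sum
    set C := Multiset.card t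
    rcases Nat.eq_zero_or_pos C with hC | hC
    · have : t = 0 := Multiset.card_eq_zero.mp hC
      subst this
      simp only [hC] at *
      have hq : Q ≤ T * T := by simpa using iht
      simp only [zero_add, Nat.sub_self, zero_mul, add_zero]
      nlinarith [hq]
    · have h1 : 1 ≤ C := hC
      have h2 : C ≤ 2 * T := by omega
      have h3 : C + 1 ≤ 2 * (a + T) := by omega
      rw [Nat.add_sub_cancel]
      zify [h1, h2, h3] at iht ⊢
      nlinarith [mul_nonneg (by omega : (0:ℤ) ≤ (a:ℤ) - 1) (by omega : (0:ℤ) ≤ (T:ℤ) - (C:ℤ))]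


lemma cc_le_n (B : Finset (KEdge n)) : cc B ≤ n := by
  have h := Nat.card_le_card_of_surjective
    ((graphOf n B).connectedComponentMk) (fun C => C.exists_rep)
  simpa [cc] using h

lemma cc_big_bound (hn : 2 < n) {B : Finset (KEdge n)} (hc : 2 ≤ cc B) :
    n + cc B ≤ Bᶜ.card + 3 := by
  classical
  set G := graphOf n B with hG
  haveI : Fintype G.ConnectedComponent := Fintype.ofFinite _
  set sz : G.ConnectedComponent → ℕ :=
    fun c => (univ.filter (fun v => G.connectedComponentMk v = c)).card with hsz
  -- sum of component sizes is n
  have hsum : ∑ c : G.ConnectedComponent, sz c = n := by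
    have := Finset.card_eq_sum_card_fiberwise
      (f := G.connectedComponentMk) (s := (univ : Finset (Fin n)))
      (t := (univ : Finset G.ConnectedComponent)) (fun x _ => Finset.mem_univ _)
    simpa [hsz] using this.symm
  have hpos : ∀ c : G.ConnectedComponent, 1 ≤ sz c := by
    intro c
    obtain ⟨v, rfl⟩ := c.exists_rep
    exact Finset.card_pos.mpr ⟨v, Finset.mem_filter.mpr ⟨Finset.mem_univ v, rfl⟩⟩
  -- same-component ordered pairs
  set D : Finset (Fin n × Fin n) :=
    univ.filter (fun p => G.connectedComponentMk p.1 ≠ G.connectedComponentMk p.2) with hD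
  have hsame : (univ.filter (fun p : Fin n × Fin n =>
      G.connectedComponentMk p.1 = G.connectedComponentMk p.2)).card
      = ∑ c : G.ConnectedComponent, sz c * sz c := by
    rw [Finset.card_eq_sum_card_fiberwise
      (f := fun p : Fin n × Fin n => G.connectedComponentMk p.1)
      (t := (univ : Finset G.ConnectedComponent)) (fun x _ => Finset.mem_univ _)]
    apply Finset.sum_congr rfl
    intro c _
    have : ((univ.filter (fun p : Fin n × Fin n =>
        G.connectedComponentMk p.1 = G.connectedComponentMk p.2)).filter
          (fun p => G.connectedComponentMk p.1 = c))
        = (univ.filter (fun v => G.connectedComponentMk v = c)) ×ˢ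
          (univ.filter (fun v => G.connectedComponentMk v = c)) := by
      ext ⟨x, y⟩
      simp only [Finset.mem_filter, Finset.mem_univ, true_and, Finset.mem_product]
      constructor
      · rintro ⟨h1, h2⟩
        exact ⟨h2, h1 ▸ h2⟩
      · rintro ⟨h1, h2⟩
        exact ⟨h1.trans h2.symm, h1⟩
    rw [this, Finset.card_product]
  have hdiff : D.card + ∑ c : G.ConnectedComponent, sz c * sz c = n * n := by
    rw [← hsame]
    have := Finset.card_filter_add_card_filter_not
      (s := (univ : Finset (Fin n × Fin n)))
      (p := fun p => G.connectedComponentMk p.1 = G.connectedComponentMk p.2)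
    rw [Finset.card_univ, Fintype.card_prod, Fintype.card_fin] at this
    have hDeq : D = univ.filter (fun a : Fin n × Fin n =>
        ¬ G.connectedComponentMk a.1 = G.connectedComponentMk a.2) := rfl
    rw [hDeq]
    omega
  -- cross edges are missing edges
  set X : Finset (KEdge n) :=
    univ.filter (fun e => G.connectedComponentMk e.val.1 ≠ G.connectedComponentMk e.val.2)
    with hX
  have hXsub : X ⊆ Bᶜ := by
    intro e he
    rw [Finset.mem_compl]
    intro heB
    have hadj : G.Adj e.val.1 e.val.2 := ⟨e, heB, Or.inl rfl⟩
    exact (Finset.mem_filter.mp he).2 (SimpleGraph.ConnectedComponent.sound hadj.reachable)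
  -- ordered cross pairs are twice the cross edges
  have h2X : 2 * X.card = D.card := by
    have hsplit := Finset.card_filter_add_card_filter_not
      (s := D) (p := fun p : Fin n × Fin n => p.1 < p.2)
    have hL : (D.filter (fun p : Fin n × Fin n => p.1 < p.2)).card = X.card := by
      apply Finset.card_bij
        (i := fun p hp => (⟨p, (Finset.mem_filter.mp hp).2⟩ : KEdge n))
      · intro p hp
        rw [hX]
        refine Finset.mem_filter.mpr ⟨Finset.mem_univ _, ?_⟩
        exact (Finset.mem_filter.mp (Finset.mem_filter.mp hp).1).2
      · intro p hp q hq hpq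
        exact congrArg Subtype.val hpq
      · intro e he
        refine ⟨e.val, ?_, rfl⟩
        refine Finset.mem_filter.mpr ⟨?_, e.property⟩
        rw [hD]
        exact Finset.mem_filter.mpr ⟨Finset.mem_univ _, (Finset.mem_filter.mp he).2⟩
    have hR : (D.filter (fun p : Fin n × Fin n => ¬ p.1 < p.2)).card
        = (D.filter (fun p : Fin n × Fin n => p.1 < p.2)).card := by
      apply Finset.card_bij (i := fun p _ => (p.2, p.1))
      · intro p hp
        obtain ⟨hpD, hplt⟩ := Finset.mem_filter.mp hp
        have hne : G.connectedComponentMk p.1 ≠ G.connectedComponentMk p.2 :=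
          (Finset.mem_filter.mp hpD).2
        have hne' : p.1 ≠ p.2 := fun h => hne (h ▸ rfl)
        refine Finset.mem_filter.mpr ⟨?_, lt_of_le_of_ne (not_lt.mp hplt) hne'.symm⟩
        rw [hD]
        exact Finset.mem_filter.mpr ⟨Finset.mem_univ _, fun h => hne h.symm⟩
      · intro p hp q hq hpq
        have h1 : p.2 = q.2 := congrArg Prod.fst hpq
        have h2 : p.1 = q.1 := congrArg Prod.snd hpq
        exact Prod.ext h2 h1
      · intro p hp
        obtain ⟨hpD, hplt⟩ := Finset.mem_filter.mp hp
        have hne : G.connectedComponentMk p.1 ≠ G.connectedComponentMk p.2 :=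
          (Finset.mem_filter.mp hpD).2
        refine ⟨(p.2, p.1), Finset.mem_filter.mpr ⟨?_, by simp [asymm hplt]⟩, rfl⟩
        rw [hD]
        exact Finset.mem_filter.mpr ⟨Finset.mem_univ _, fun h => hne h.symm⟩
    omega
  -- the convexity bound
  have hconv := multiset_sq_sum ((univ : Finset G.ConnectedComponent).val.map sz)
    (by
      intro x hx
      obtain ⟨c, _, rfl⟩ := Multiset.mem_map.mp hx
      exact hpos c)
  rw [Multiset.card_map, Multiset.map_map] at hconv
  have hcards : Multiset.card (univ : Finset G.ConnectedComponent).val = cc B := by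
    rw [hG] at *
    simp [cc, Nat.card_eq_fintype_card, Finset.card_univ]
    congr!
  have hsum' : ((univ : Finset G.ConnectedComponent).val.map sz).sum = n := hsum
  have hsq : ((univ : Finset G.ConnectedComponent).val.map ((fun x => x * x) ∘ sz)).sum
      = ∑ c : G.ConnectedComponent, sz c * sz c := rfl
  rw [hcards, hsum', hsq] at hconv
  -- combine everything
  have hXm : X.card ≤ Bᶜ.card := Finset.card_le_card hXsub
  set c := cc B
  have hcn : c ≤ n := cc_le_n B
  have key : (c - 1) * (2 * n - c) ≤ 2 * Bᶜ.card := by omega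
  have h1 : 1 ≤ c := by omega
  have h2 : c ≤ 2 * n := by omega
  zify [h1, h2] at key ⊢
  nlinarith [mul_nonneg (by omega : (0:ℤ) ≤ (c:ℤ) - 2) (by omega : (0:ℤ) ≤ 2*(n:ℤ) - 3 - c)]


lemma two_mul_card_KEdge : 2 * Fintype.card (KEdge n) = n * n - n := by
  classical
  have hcardeq : Fintype.card (KEdge n)
      = (univ.filter (fun p : Fin n × Fin n => p.1 < p.2)).card :=
    Fintype.card_subtype _
  have hoff : ((univ : Finset (Fin n)).offDiag).card = n * n - n := by
    rw [Finset.offDiag_card]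
    simp
  have hsplit := Finset.card_filter_add_card_filter_not
    (s := (univ : Finset (Fin n)).offDiag) (p := fun p => p.1 < p.2)
  have hL : (univ : Finset (Fin n)).offDiag.filter (fun p => p.1 < p.2)
      = univ.filter (fun p : Fin n × Fin n => p.1 < p.2) := by
    ext p
    simp only [Finset.mem_filter, Finset.mem_offDiag, Finset.mem_univ, true_and]
    exact ⟨fun h => h.2, fun h => ⟨ne_of_lt h, h⟩⟩
  have hR : ((univ : Finset (Fin n)).offDiag.filter (fun p => ¬ p.1 < p.2)).card
      = ((univ : Finset (Fin n)).offDiag.filter (fun p => p.1 < p.2)).card := by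
    apply Finset.card_bij (i := fun p _ => (p.2, p.1))
    · intro p hp
      obtain ⟨hpD, hplt⟩ := Finset.mem_filter.mp hp
      obtain ⟨-, -, hne⟩ := Finset.mem_offDiag.mp hpD
      exact Finset.mem_filter.mpr ⟨Finset.mem_offDiag.mpr ⟨Finset.mem_univ _,
        Finset.mem_univ _, hne.symm⟩, lt_of_le_of_ne (not_lt.mp hplt) hne.symm⟩
    · intro p hp q hq hpq
      exact Prod.ext (congrArg Prod.snd hpq) (congrArg Prod.fst hpq)
    · intro p hp
      obtain ⟨hpD, hplt⟩ := Finset.mem_filter.mp hp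
      exact ⟨(p.2, p.1), Finset.mem_filter.mpr ⟨Finset.mem_offDiag.mpr ⟨Finset.mem_univ _,
        Finset.mem_univ _, (ne_of_lt hplt).symm⟩, asymm hplt⟩, rfl⟩
  rw [hL] at hsplit hR
  rw [hcardeq]
  omega

lemma card_KEdge (hn : 2 < n) : Fintype.card (KEdge n) = n * (n - 1) / 2 := by
  have h := two_mul_card_KEdge (n := n)
  have hid : n * (n - 1) = n * n - n := by
    have : n * (n - 1) + n * 1 = n * n := by
      rw [← Nat.mul_add]
      congr 1
      omega
    omega
  omega

lemma cycleRk_eq (A : Finset (KEdge n)) : cycleRk n A = n - cc A := rfl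

end KFlow

open KFlow

/-- For `n > 2`, with `N = n(n-1)/2` and `N' = (n-1)(n-2)/2`, the flow polynomial
of `K_n` is monic of degree `N'` and its coefficient of `x^{N'-k}` equals
`(-1)^k C(N,k)` for all `0 ≤ k ≤ n-3`. -/
theorem flowPoly_completeGraph_major_coeffs (n : ℕ) (hn : 2 < n) :
    (flowPolyKn n).natDegree = (n - 1) * (n - 2) / 2 ∧
      (flowPolyKn n).Monic ∧
      ∀ k ≤ n - 3,
        (flowPolyKn n).coeff ((n - 1) * (n - 2) / 2 - k) =
          (-1 : ℝ) ^ k * ((n * (n - 1) / 2).choose k : ℝ) := by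
  classical
  set N := Fintype.card (KEdge n) with hN
  have h2N : 2 * N = n * n - n := two_mul_card_KEdge
  set N' := N - (n - 1) with hN'def
  obtain ⟨hN'val, h2N', hN'ge, hNval⟩ :
      (n - 1) * (n - 2) / 2 = N' ∧ 2 * N' = (n - 1) * (n - 2) ∧
        n - 2 ≤ N' ∧ n * (n - 1) / 2 = N := by
    have h3n : 3 * n ≤ n * n := by nlinarith
    have hid2 : 2 * (n - 2) ≤ (n - 1) * (n - 2) :=
      Nat.mul_le_mul_right _ (by omega)
    have hidentity : (n - 1) * (n - 2) + 3 * n = n * n + 2 := by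
      zify [show 1 ≤ n by omega, show 2 ≤ n by omega]
      ring
    have hNn : n * (n - 1) + n = n * n := by
      zify [show 1 ≤ n by omega]
      ring
    obtain ⟨Q, hQ⟩ : ∃ q, q = (n - 1) * (n - 2) := ⟨_, rfl⟩
    obtain ⟨P, hP⟩ : ∃ p, p = n * n := ⟨_, rfl⟩
    obtain ⟨R, hR⟩ : ∃ r, r = n * (n - 1) := ⟨_, rfl⟩
    rw [← hQ] at hid2 hidentity
    rw [← hP] at h3n hidentity hNn h2N
    rw [← hR] at hNn
    rw [← hQ, ← hR]
    omega
  -- bond rank computations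
  have hbonduniv : bondRk n univ = N' := by
    unfold bondRk
    rw [cycleRk_eq, cycleRk_eq, Finset.compl_univ, cc_empty, cc_univ hn, Finset.card_univ]
    omega
  have hbond : ∀ A : Finset (KEdge n),
      bondRk n A = (n - cc Aᶜ) + A.card - (n - 1) := by
    intro A
    unfold bondRk
    rw [cycleRk_eq, cycleRk_eq, cc_univ hn]
  -- the key dichotomy
  have hiff : ∀ k ≤ n - 3, ∀ A : Finset (KEdge n),
      (N' - k = bondRk n univ - bondRk n A ↔ A.card = k) := by
    intro k hk A
    rw [hbonduniv]
    have hb := hbond A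
    have hcompl : Aᶜ ∪ A = univ := by
      ext x
      simp [em']
    have hc1 : cc Aᶜ ≤ 1 + A.card := by
      have h := cc_union_le Aᶜ A
      rw [hcompl, cc_univ hn] at h
      omega
    have hcn : cc Aᶜ ≤ n := cc_le_n _
    have hcards : A.card + Aᶜ.card = N := by
      rw [hN]
      exact Finset.card_add_card_compl A
    have hdisj : cc Aᶜ ≤ 1 ∨ n + cc Aᶜ ≤ A.card + 3 := by
      rcases le_or_gt (cc Aᶜ) 1 with h | h
      · exact Or.inl h
      · right
        have := cc_big_bound hn (B := Aᶜ) (by omega)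
        rwa [compl_compl] at this
    by_cases ha : A.card ≤ n - 2
    · have hccA : cc Aᶜ = 1 := by
        apply cc_of_small_compl hn
        rw [compl_compl]
        omega
      rw [hccA] at hb
      omega
    · omega
  -- coefficient formula
  have hcoeffval : ∀ k ≤ n - 3,
      (flowPolyKn n).coeff (N' - k) = (-1 : ℝ) ^ k * (N.choose k : ℝ) := by
    intro k hk
    unfold flowPolyKn
    rw [Polynomial.finset_sum_coeff]
    have hterm : ∀ A ∈ (univ : Finset (Finset (KEdge n))),
        (((-1 : ℝ) ^ A.card) • (Polynomial.X ^ (bondRk n univ - bondRk n A))).coeff (N' - k)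
          = if A.card = k then (-1 : ℝ) ^ k else 0 := by
      intro A _
      rw [Polynomial.coeff_smul, Polynomial.coeff_X_pow]
      by_cases hAk : A.card = k
      · rw [if_pos ((hiff k hk A).mpr hAk), if_pos hAk, hAk, smul_eq_mul, mul_one]
      · rw [if_neg (fun h => hAk ((hiff k hk A).mp h)), if_neg hAk, smul_zero]
    rw [Finset.sum_congr rfl hterm, ← Finset.sum_filter, Finset.sum_const]
    have hfilter : (univ : Finset (Finset (KEdge n))).filter (fun A => A.card = k)
        = Finset.powersetCard k univ := by
      rw [Finset.powersetCard_eq_filter, Finset.powerset_univ]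
    rw [hfilter, Finset.card_powersetCard, Finset.card_univ, nsmul_eq_mul, mul_comm]
  have htop : (flowPolyKn n).coeff N' = 1 := by
    have h0 := hcoeffval 0 (by omega)
    simpa using h0
  have hdegle : (flowPolyKn n).natDegree ≤ N' := by
    unfold flowPolyKn
    apply Polynomial.natDegree_sum_le_of_forall_le
    intro A _
    refine le_trans (Polynomial.natDegree_smul_le _ _) ?_
    rw [Polynomial.natDegree_X_pow, hbonduniv]
    exact Nat.sub_le _ _
  have hdeg : (flowPolyKn n).natDegree = N' :=
    le_antisymm hdegle (Polynomial.le_natDegree_of_ne_zero (by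
      rw [htop]; exact one_ne_zero))
  refine ⟨by rw [hN'val]; exact hdeg,
    Polynomial.monic_of_natDegree_le_of_coeff_eq_one N' hdegle htop, ?_⟩
  intro k hk
  rw [hN'val, hNval]
  exact hcoeffval k hk
end

section
/- The characteristic polynomial of the matroid dual to PG(n−1, q) satisfies χ_{PG(n−1,q)*}(x) = ((−1)^{(q^n−1)/(q−1)} / x^n) · Σ_{k=0}^{n} C(n, k)_q · (1 − x)^{(q^k−1)/(q−1)} · ∏_{i=0}^{n−k−1} (x − q^i), where C(n, k)_q is the Gaussian binomial coefficient. -/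
open Finset

open Module
open scoped LinearAlgebra.Projectivization

open Finset

noncomputable def gbinom (Q : ℝ) (m k : ℕ) : ℝ :=
  ∏ i ∈ range k, (Q ^ (m - i) - 1) / (Q ^ (k - i) - 1)

lemma pow_sub_one_pos {Q : ℝ} (hQ : 1 < Q) {j : ℕ} (hj : 0 < j) : 0 < Q ^ j - 1 := by
  have := one_lt_pow₀ hQ hj.ne'
  linarith

lemma pden_pos {Q : ℝ} (hQ : 1 < Q) (k : ℕ) : 0 < ∏ i ∈ range k, (Q ^ (k - i) - 1) := by
  apply Finset.prod_pos
  intro i hi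
  exact pow_sub_one_pos hQ (by simp at hi; omega)

lemma gbinom_eq (Q : ℝ) (m k : ℕ) :
    gbinom Q m k = (∏ i ∈ range k, (Q ^ (m - i) - 1)) / ∏ i ∈ range k, (Q ^ (k - i) - 1) := by
  rw [gbinom, Finset.prod_div_distrib]

lemma gbinom_zero (Q : ℝ) (m : ℕ) : gbinom Q m 0 = 1 := by simp [gbinom]

lemma gbinom_succ_self (Q : ℝ) (m : ℕ) : gbinom Q m (m + 1) = 0 := by
  refine Finset.prod_eq_zero (i := m) (by simp) ?_
  simp

lemma gbinom_pascal {Q : ℝ} (hQ : 1 < Q) {m d : ℕ} (hd : d ≤ m) :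
    gbinom Q (m + 1) (d + 1) = gbinom Q m (d + 1) + Q ^ (m - d) * gbinom Q m d := by
  have h1 : (∏ i ∈ range (d + 1), (Q ^ (m + 1 - i) - 1))
      = (∏ i ∈ range d, (Q ^ (m - i) - 1)) * (Q ^ (m + 1) - 1) := by
    rw [Finset.prod_range_succ']
    congr 1
    refine Finset.prod_congr rfl fun i _ => ?_
    congr 2
    omega
  have h2 : (∏ i ∈ range (d + 1), (Q ^ (m - i) - 1))
      = (∏ i ∈ range d, (Q ^ (m - i) - 1)) * (Q ^ (m - d) - 1) := Finset.prod_range_succ _ _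
  have h3 : (∏ i ∈ range (d + 1), (Q ^ (d + 1 - i) - 1))
      = (∏ i ∈ range d, (Q ^ (d - i) - 1)) * (Q ^ (d + 1) - 1) := by
    rw [Finset.prod_range_succ']
    congr 1
    refine Finset.prod_congr rfl fun i _ => ?_
    congr 2
    omega
  have hpd := (pden_pos hQ d).ne'
  have hd1 : (Q ^ (d + 1) - 1) ≠ 0 := (pow_sub_one_pos hQ (Nat.succ_pos d)).ne'
  have hpow : Q ^ (m + 1) = Q ^ (m - d) * Q ^ (d + 1) := by
    rw [← pow_add]; congr 1; omega
  rw [gbinom_eq, gbinom_eq, gbinom_eq, h1, h2, h3, hpow]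
  field_simp
  ring

lemma gauss_sum {Q : ℝ} (hQ : 1 < Q) (x : ℝ) (m : ℕ) :
    ∑ d ∈ range (m + 1), gbinom Q m d * ∏ i ∈ range (m - d), (x - Q ^ i) = x ^ m := by
  induction m with
  | zero => simp [gbinom]
  | succ m ih =>
    have hstep : ∀ d ∈ range (m + 1),
        gbinom Q (m + 1) (d + 1) * ∏ i ∈ range (m - d), (x - Q ^ i)
        = gbinom Q m (d + 1) * ∏ i ∈ range (m - d), (x - Q ^ i)
          + Q ^ (m - d) * (gbinom Q m d * ∏ i ∈ range (m - d), (x - Q ^ i)) := by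
      intro d hd
      rw [gbinom_pascal hQ (by simp at hd; omega)]
      ring
    calc ∑ d ∈ range (m + 1 + 1), gbinom Q (m + 1) d * ∏ i ∈ range (m + 1 - d), (x - Q ^ i)
        = (∑ d ∈ range (m + 1), gbinom Q (m + 1) (d + 1) * ∏ i ∈ range (m - d), (x - Q ^ i))
          + gbinom Q (m + 1) 0 * ∏ i ∈ range (m + 1), (x - Q ^ i) := by
          rw [Finset.sum_range_succ']
          simp only [Nat.succ_sub_succ, Nat.sub_zero]
      _ = (∑ d ∈ range (m + 1), gbinom Q m (d + 1) * ∏ i ∈ range (m - d), (x - Q ^ i))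
          + (∑ d ∈ range (m + 1), Q ^ (m - d) * (gbinom Q m d * ∏ i ∈ range (m - d), (x - Q ^ i)))
          + ∏ i ∈ range (m + 1), (x - Q ^ i) := by
          rw [Finset.sum_congr rfl hstep, Finset.sum_add_distrib, gbinom_zero, one_mul]
      _ = (∑ d ∈ range m, gbinom Q m (d + 1) * ∏ i ∈ range (m - d), (x - Q ^ i))
          + (∑ d ∈ range (m + 1), Q ^ (m - d) * (gbinom Q m d * ∏ i ∈ range (m - d), (x - Q ^ i)))
          + ∏ i ∈ range (m + 1), (x - Q ^ i) := by
          rw [Finset.sum_range_succ, gbinom_succ_self, Nat.sub_self]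
          simp
      _ = (∑ d ∈ range (m + 1), gbinom Q m d * ∏ i ∈ range (m + 1 - d), (x - Q ^ i))
          + (∑ d ∈ range (m + 1), Q ^ (m - d) * (gbinom Q m d * ∏ i ∈ range (m - d), (x - Q ^ i))) := by
          rw [Finset.sum_range_succ' (fun d => gbinom Q m d * ∏ i ∈ range (m + 1 - d), (x - Q ^ i))]
          simp only [Nat.succ_sub_succ, Nat.sub_zero, gbinom_zero, one_mul]
          ring
      _ = ∑ d ∈ range (m + 1), gbinom Q m d * (x * ∏ i ∈ range (m - d), (x - Q ^ i)) := by
          rw [← Finset.sum_add_distrib]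
          refine Finset.sum_congr rfl fun d hd => ?_
          have h : (m + 1 - d) = (m - d) + 1 := by simp at hd; omega
          rw [h, Finset.prod_range_succ]
          ring
      _ = x ^ (m + 1) := by
          have : ∀ d ∈ range (m + 1), gbinom Q m d * (x * ∏ i ∈ range (m - d), (x - Q ^ i))
              = x * (gbinom Q m d * ∏ i ∈ range (m - d), (x - Q ^ i)) := fun d _ => by ring
          rw [Finset.sum_congr rfl this, ← Finset.mul_sum, ih]
          ring

open Finset Module

section Counting

variable {F : Type*} [Field F] [Fintype F] {V : Type*} [AddCommGroup V] [Module F V] [Fintype V]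

/-- The equivalence splitting a linearly independent `(k+1)`-tuple into its tail and head. -/
noncomputable def liConsEquiv (k : ℕ) :
    {w : Fin (k + 1) → V // LinearIndependent F w} ≃
      Σ v : {v : Fin k → V // LinearIndependent F v},
        {x : V // x ∉ Submodule.span F (Set.range v.1)} where
  toFun w := ⟨⟨Fin.tail w.1, (linearIndependent_fin_succ.mp w.2).1⟩,
    ⟨w.1 0, (linearIndependent_fin_succ.mp w.2).2⟩⟩
  invFun p := ⟨Fin.cons p.2.1 p.1.1, linearIndependent_fin_cons.mpr ⟨p.1.2, p.2.2⟩⟩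
  left_inv w := Subtype.ext (Fin.cons_self_tail w.1)
  right_inv p := by
    rcases p with ⟨⟨v, hv⟩, ⟨x, hx⟩⟩
    simp [Fin.tail_cons, Fin.cons_zero]
    rfl

lemma card_li_tuples (k : ℕ) :
    Nat.card {v : Fin k → V // LinearIndependent F v} =
      ∏ i ∈ range k, (Fintype.card V - Fintype.card F ^ i) := by
  haveI : FiniteDimensional F V := Module.Finite.of_finite
  induction k with
  | zero =>
    rw [Finset.range_zero, Finset.prod_empty]
    rw [Nat.card_congr (Equiv.subtypeUnivEquiv (fun v => linearIndependent_empty_type))]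
    simp [Nat.card_eq_fintype_card]
  | succ k ih =>
    rw [Nat.card_congr (liConsEquiv k), Finset.prod_range_succ, ← ih]
    haveI : ∀ v : {v : Fin k → V // LinearIndependent F v},
        Fintype {x : V // x ∉ Submodule.span F (Set.range v.1)} := fun v => by
      classical exact Fintype.ofFinite _
    haveI : Fintype {v : Fin k → V // LinearIndependent F v} := by
      classical exact Fintype.ofFinite _
    rw [Nat.card_eq_fintype_card, Fintype.card_sigma]
    have hfib : ∀ v : {v : Fin k → V // LinearIndependent F v},
        Fintype.card {x : V // x ∉ Submodule.span F (Set.range v.1)}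
          = Fintype.card V - Fintype.card F ^ k := by
      intro v
      classical
      have h1 : Fintype.card {x : V // x ∈ Submodule.span F (Set.range v.1)}
          = Fintype.card F ^ k := by
        have : Fintype.card {x : V // x ∈ Submodule.span F (Set.range v.1)}
            = Fintype.card (Submodule.span F (Set.range v.1)) := Fintype.card_congr (Equiv.refl _)
        rw [this, card_eq_pow_finrank (K := F), finrank_span_eq_card v.2]
        simp
      rw [Fintype.card_subtype_compl, h1]
    rw [Finset.sum_congr rfl (fun v _ => hfib v)]
    simp [Finset.card_univ, Nat.card_eq_fintype_card, mul_comm]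

/-- The fiber of `span ∘ range` over a `k`-dimensional subspace `W` is equivalent to
the linearly independent `k`-tuples of `W`. -/
noncomputable def liFiberEquiv (k : ℕ) (W : Submodule F V) (hW : finrank F W = k) :
    {v : {v : Fin k → V // LinearIndependent F v} // Submodule.span F (Set.range v.1) = W} ≃
      {u : Fin k → W // LinearIndependent F u} where
  toFun v := ⟨fun i => ⟨v.1.1 i, by
      exact (le_of_eq v.2) (Submodule.subset_span (Set.mem_range_self i))⟩,
    LinearIndependent.of_comp W.subtype (by exact v.1.2)⟩
  invFun u := ⟨⟨fun i => (u.1 i : V), u.2.map' W.subtype (Submodule.ker_subtype W)⟩, by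
    haveI : FiniteDimensional F V := Module.Finite.of_finite
    have hspan : Submodule.span F (Set.range u.1) = ⊤ := by
      apply Submodule.eq_top_of_finrank_eq
      rw [finrank_span_eq_card u.2, hW]
      simp
    have : Set.range (fun i => (u.1 i : V)) = W.subtype '' Set.range u.1 := by
      rw [← Set.range_comp]; rfl
    rw [this, ← Submodule.map_span, hspan, Submodule.map_subtype_top]⟩
  left_inv v := Subtype.ext (Subtype.ext rfl)
  right_inv u := Subtype.ext rfl

lemma card_subspaces_mul (k : ℕ) :
    Nat.card {W : Submodule F V // finrank F W = k} *
        ∏ i ∈ range k, (Fintype.card F ^ k - Fintype.card F ^ i)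
      = ∏ i ∈ range k, (Fintype.card V - Fintype.card F ^ i) := by
  classical
  haveI : FiniteDimensional F V := Module.Finite.of_finite
  haveI : Finite (Submodule F V) := Finite.of_injective _ SetLike.coe_injective
  haveI : Fintype (Submodule F V) := Fintype.ofFinite _
  haveI : Fintype {v : Fin k → V // LinearIndependent F v} := Fintype.ofFinite _
  haveI : Fintype {W : Submodule F V // finrank F W = k} := Fintype.ofFinite _
  rw [← card_li_tuples k]
  let f : {v : Fin k → V // LinearIndependent F v} → {W : Submodule F V // finrank F W = k} :=
    fun v => ⟨Submodule.span F (Set.range v.1), by rw [finrank_span_eq_card v.2]; simp⟩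
  have e := Equiv.sigmaFiberEquiv f
  haveI : ∀ W : {W : Submodule F V // finrank F W = k}, Fintype {v // f v = W} :=
    fun W => Fintype.ofFinite _
  rw [Nat.card_congr e.symm, Nat.card_eq_fintype_card, Nat.card_eq_fintype_card,
    Fintype.card_sigma]
  have hfib : ∀ W : {W : Submodule F V // finrank F W = k},
      Fintype.card {v // f v = W} = ∏ i ∈ range k, (Fintype.card F ^ k - Fintype.card F ^ i) := by
    intro W
    have e2 : {v // f v = W} ≃
        {v : {v : Fin k → V // LinearIndependent F v} //
          Submodule.span F (Set.range v.1) = W.1} := by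
      apply Equiv.subtypeEquivRight
      intro v
      constructor
      · intro h; exact congrArg Subtype.val h
      · intro h; exact Subtype.ext h
    have e3 := (liFiberEquiv k W.1 W.2).trans (Equiv.refl _)
    have : Fintype.card {v // f v = W}
        = Nat.card {u : Fin k → W.1 // LinearIndependent F u} := by
      rw [← Nat.card_eq_fintype_card, Nat.card_congr (e2.trans (liFiberEquiv k W.1 W.2))]
    rw [this, card_li_tuples k]
    refine Finset.prod_congr rfl fun i _ => ?_
    rw [card_eq_pow_finrank (K := F) (V := W.1), W.2]
  rw [Finset.sum_congr rfl (fun W _ => hfib W), Finset.sum_const, smul_eq_mul,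
    Finset.card_univ]

end Counting

open scoped LinearAlgebra.Projectivization

section ProjCount

variable {F : Type*} [Field F] [Fintype F] {V : Type*} [AddCommGroup V] [Module F V] [Fintype V]


lemma rep_mem_of_le {W : Submodule F V} {p : ℙ F V} (h : p.submodule ≤ W) : p.rep ∈ W := by
  apply h
  rw [Projectivization.submodule_eq]
  exact Submodule.mem_span_singleton_self _

lemma card_points_mul (W : Submodule F V) :
    Nat.card {p : ℙ F V // p.submodule ≤ W} * (Fintype.card F - 1)
      = Fintype.card F ^ finrank F W - 1 := by
  classical
  haveI : FiniteDimensional F V := Module.Finite.of_finite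
  -- nonzero vectors of W
  let T := {v : V // v ∈ W ∧ v ≠ 0}
  let g : T → {p : ℙ F V // p.submodule ≤ W} := fun v =>
    ⟨Projectivization.mk F v.1 v.2.2, by
      rw [Projectivization.submodule_mk]
      exact (Submodule.span_singleton_le_iff_mem _ _).mpr v.2.1⟩
  have hfib : ∀ p : {p : ℙ F V // p.submodule ≤ W}, Nat.card {v : T // g v = p} = Fintype.card F - 1 := by
    intro p
    have hrep : p.1.rep ∈ W := rep_mem_of_le p.2
    have hrep0 : p.1.rep ≠ 0 := p.1.rep_nonzero
    have hbij : Function.Bijective (fun a : Fˣ =>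
        (⟨⟨(a : F) • p.1.rep, ⟨W.smul_mem _ hrep, smul_ne_zero (Units.ne_zero a) hrep0⟩⟩, by
          apply Subtype.ext
          show Projectivization.mk F ((a : F) • p.1.rep) _ = p.1
          conv_rhs => rw [← p.1.mk_rep]
          rw [Projectivization.mk_eq_mk_iff]
          exact ⟨a, rfl⟩⟩ : {v : T // g v = p})) := by
      constructor
      · intro a b hab
        have : (a : F) • p.1.rep = (b : F) • p.1.rep := by
          have := congrArg (fun z => (z.1.1 : V)) hab
          exact this
        have hsub : ((a : F) - (b : F)) • p.1.rep = 0 := by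
          rw [sub_smul, this, sub_self]
        rcases smul_eq_zero.mp hsub with h | h
        · exact Units.ext (sub_eq_zero.mp h)
        · exact absurd h hrep0
      · rintro ⟨⟨v, hv, hv0⟩, hgv⟩
        have : Projectivization.mk F v hv0 = p.1 := congrArg Subtype.val hgv
        rw [← p.1.mk_rep, Projectivization.mk_eq_mk_iff] at this
        obtain ⟨a, ha⟩ := this
        refine ⟨a, ?_⟩
        apply Subtype.ext
        apply Subtype.ext
        exact ha
    rw [Nat.card_congr (Equiv.ofBijective _ hbij).symm, Nat.card_eq_fintype_card,
      Fintype.card_units]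
  -- total count
  have htot : Nat.card T = Fintype.card F ^ finrank F W - 1 := by
    have e : T ≃ {w : W // w ≠ 0} :=
      { toFun := fun v => ⟨⟨v.1, v.2.1⟩, by
          intro h
          exact v.2.2 (by simpa [Submodule.mk_eq_zero] using congrArg Subtype.val h)⟩
        invFun := fun w => ⟨w.1.1, w.1.2, fun h => w.2 (Subtype.ext h)⟩
        left_inv := fun v => rfl
        right_inv := fun w => rfl }
    rw [Nat.card_congr e]
    classical
    rw [Nat.card_eq_fintype_card]
    have : Fintype.card {w : W // ¬ (w = 0)} = Fintype.card W - Fintype.card {w : W // w = 0} :=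
      Fintype.card_subtype_compl _
    rw [this, Fintype.card_subtype_eq, card_eq_pow_finrank (K := F) (V := W)]
  classical
  haveI : Finite (ℙ F V) := Quotient.finite _
  haveI : Fintype {p : ℙ F V // p.submodule ≤ W} := Fintype.ofFinite _
  haveI : ∀ p : {p : ℙ F V // p.submodule ≤ W}, Fintype {v : T // g v = p} :=
    fun p => Fintype.ofFinite _
  have htot2 : Nat.card T = ∑ _p : {p : ℙ F V // p.submodule ≤ W}, (Fintype.card F - 1) := by
    rw [Nat.card_congr (Equiv.sigmaFiberEquiv g).symm, Nat.card_eq_fintype_card,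
      Fintype.card_sigma]
    exact Finset.sum_congr rfl (fun p _ => by rw [← Nat.card_eq_fintype_card]; exact hfib p)
  rw [← htot, htot2, Finset.sum_const, smul_eq_mul, Finset.card_univ, Nat.card_eq_fintype_card,
    mul_comm]

end ProjCount


section SubspaceSums

variable {F : Type*} [Field F] [Fintype F] {V : Type*} [AddCommGroup V] [Module F V] [Fintype V]

lemma finrank_comap_mkQ (U : Submodule F V) (W' : Submodule F (V ⧸ U)) :
    finrank F (W'.comap U.mkQ) = finrank F W' + finrank F U := by
  haveI : FiniteDimensional F V := Module.Finite.of_finite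
  have hUle : U ≤ W'.comap U.mkQ := by
    intro v hv
    have h0 : U.mkQ v = 0 := (Submodule.Quotient.mk_eq_zero U).mpr hv
    show U.mkQ v ∈ W'
    rw [h0]
    exact W'.zero_mem
  let f : (W'.comap U.mkQ) →ₗ[F] V ⧸ U := (U.mkQ).comp (W'.comap U.mkQ).subtype
  have hrange : LinearMap.range f = W' := by
    rw [LinearMap.range_comp, Submodule.range_subtype,
      Submodule.map_comap_eq_of_surjective (U.mkQ_surjective)]
  have hker : LinearMap.ker f = U.comap (W'.comap U.mkQ).subtype := by
    rw [LinearMap.ker_comp, Submodule.ker_mkQ]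
  have h1 := LinearMap.finrank_range_add_finrank_ker f
  rw [hrange, hker] at h1
  have h2 : finrank F (U.comap (W'.comap U.mkQ).subtype) = finrank F U :=
    (Submodule.comapSubtypeEquivOfLe hUle).finrank_eq
  omega

lemma cast_card_subspaces {m : ℕ} (hm : finrank F V = m) (k : ℕ) (hk : k ≤ m) :
    (Nat.card {W : Submodule F V // finrank F W = k} : ℝ)
      = gbinom (Fintype.card F) m k := by
  have hq : (1 : ℕ) < Fintype.card F := Fintype.one_lt_card
  have hQ : (1 : ℝ) < (Fintype.card F : ℝ) := by exact_mod_cast hq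
  set Q : ℝ := (Fintype.card F : ℝ)
  have hcardV : Fintype.card V = Fintype.card F ^ m := by
    rw [card_eq_pow_finrank (K := F) (V := V), hm]
  have h := card_subspaces_mul (F := F) (V := V) k
  rw [hcardV] at h
  have hsub : ∀ j i : ℕ, i < j → ((Fintype.card F ^ j - Fintype.card F ^ i : ℕ) : ℝ)
      = Q ^ j - Q ^ i := by
    intro j i hij
    have : Fintype.card F ^ i ≤ Fintype.card F ^ j := Nat.pow_le_pow_right (by omega) hij.le
    push_cast [Nat.cast_sub this]
    ring
  have hcast2 : (Nat.card {W : Submodule F V // finrank F W = k} : ℝ) *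
      ∏ i ∈ range k, (Q ^ k - Q ^ i) = ∏ i ∈ range k, (Q ^ m - Q ^ i) := by
    calc (Nat.card {W : Submodule F V // finrank F W = k} : ℝ) * ∏ i ∈ range k, (Q ^ k - Q ^ i)
        = ((Nat.card {W : Submodule F V // finrank F W = k} *
            ∏ i ∈ range k, (Fintype.card F ^ k - Fintype.card F ^ i) : ℕ) : ℝ) := by
          rw [Nat.cast_mul, Nat.cast_prod]
          congr 1
          exact Finset.prod_congr rfl fun i hi => (hsub k i (mem_range.mp hi)).symm
      _ = ((∏ i ∈ range k, (Fintype.card F ^ m - Fintype.card F ^ i) : ℕ) : ℝ) := by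
          exact_mod_cast congrArg (Nat.cast : ℕ → ℝ) h
      _ = ∏ i ∈ range k, (Q ^ m - Q ^ i) := by
          rw [Nat.cast_prod]
          exact Finset.prod_congr rfl fun i hi =>
            hsub m i (lt_of_lt_of_le (mem_range.mp hi) hk)
  -- now divide
  have hden : ∏ i ∈ range k, (Q ^ k - Q ^ i) ≠ 0 := by
    apply ne_of_gt
    apply Finset.prod_pos
    intro i hi
    have : Q ^ i < Q ^ k := pow_lt_pow_right₀ hQ (mem_range.mp hi)
    linarith
  have hgb : gbinom Q m k = ∏ i ∈ range k, ((Q ^ m - Q ^ i) / (Q ^ k - Q ^ i)) := by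
    rw [gbinom]
    refine Finset.prod_congr rfl fun i hi => ?_
    have hik : i < k := mem_range.mp hi
    have him : i < m := lt_of_lt_of_le hik hk
    have hdk : Q ^ k - Q ^ i ≠ 0 := by
      have : Q ^ i < Q ^ k := pow_lt_pow_right₀ hQ hik
      linarith
    have hdk2 : Q ^ (k - i) - 1 ≠ 0 := (pow_sub_one_pos hQ (by omega)).ne'
    rw [div_eq_div_iff hdk2 hdk]
    have e1 : Q ^ m = Q ^ (m - i) * Q ^ i := by rw [← pow_add]; congr 1; omega
    have e2 : Q ^ k = Q ^ (k - i) * Q ^ i := by rw [← pow_add]; congr 1; omega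
    rw [e1, e2]
    ring
  rw [hgb, Finset.prod_div_distrib, eq_div_iff hden]
  exact hcast2

lemma sum_subspaces_prod [Fintype (Submodule F V)] (x : ℝ) :
    ∑ W : Submodule F V, ∏ i ∈ range (finrank F V - finrank F W), (x - (Fintype.card F : ℝ) ^ i)
      = x ^ finrank F V := by
  classical
  haveI : FiniteDimensional F V := Module.Finite.of_finite
  have hq : (1 : ℝ) < (Fintype.card F : ℝ) := by exact_mod_cast Fintype.one_lt_card
  set m := finrank F V with hm
  rw [← Finset.sum_fiberwise_of_maps_to (g := fun W : Submodule F V => finrank F W)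
    (t := range (m + 1)) (fun W _ => mem_range.mpr (Nat.lt_succ_of_le (W.finrank_le)))]
  rw [← gauss_sum hq x m]
  refine Finset.sum_congr rfl fun k hk => ?_
  have hk' : k ≤ m := by simp at hk; omega
  have hinner : ∀ W ∈ univ.filter (fun W : Submodule F V => finrank F W = k),
      (∏ i ∈ range (m - finrank F W), (x - (Fintype.card F : ℝ) ^ i))
        = ∏ i ∈ range (m - k), (x - (Fintype.card F : ℝ) ^ i) := by
    intro W hW
    simp only [mem_filter] at hW
    rw [hW.2]
  rw [Finset.sum_congr rfl hinner, Finset.sum_const, nsmul_eq_mul]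
  congr 1
  have : (univ.filter (fun W : Submodule F V => finrank F W = k)).card
      = Nat.card {W : Submodule F V // finrank F W = k} := by
    rw [Nat.card_eq_fintype_card, Fintype.card_subtype]
  rw [this, cast_card_subspaces rfl k hk']

lemma sum_interval_prod [Fintype (Submodule F V)] (U : Submodule F V) (x : ℝ)
    [DecidablePred fun W : Submodule F V => U ≤ W] :
    ∑ W ∈ univ.filter (fun W : Submodule F V => U ≤ W),
        ∏ i ∈ range (finrank F V - finrank F W), (x - (Fintype.card F : ℝ) ^ i)
      = x ^ (finrank F V - finrank F U) := by
  classical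
  haveI : FiniteDimensional F V := Module.Finite.of_finite
  haveI : Fintype (V ⧸ U) := Fintype.ofFinite _
  haveI : Fintype (Submodule F (V ⧸ U)) := Fintype.ofFinite _
  let e := (Submodule.comapMkQRelIso U).toEquiv
  have hquot : finrank F (V ⧸ U) = finrank F V - finrank F U := by
    have := Submodule.finrank_quotient_add_finrank U
    omega
  calc ∑ W ∈ univ.filter (fun W : Submodule F V => U ≤ W),
      ∏ i ∈ range (finrank F V - finrank F W), (x - (Fintype.card F : ℝ) ^ i)
      = ∑ Ws : {W : Submodule F V // U ≤ W},
        ∏ i ∈ range (finrank F V - finrank F Ws.1), (x - (Fintype.card F : ℝ) ^ i) :=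
      Finset.sum_subtype _ (by simp) _
    _ = ∑ W' : Submodule F (V ⧸ U),
        ∏ i ∈ range (finrank F V - finrank F (e W').1), (x - (Fintype.card F : ℝ) ^ i) :=
      (Equiv.sum_comp e _).symm
    _ = ∑ W' : Submodule F (V ⧸ U),
        ∏ i ∈ range (finrank F (V ⧸ U) - finrank F W'), (x - (Fintype.card F : ℝ) ^ i) := by
      refine Finset.sum_congr rfl fun W' _ => ?_
      have h1 : finrank F ((e W').1 : Submodule F V) = finrank F W' + finrank F U := by
        exact finrank_comap_mkQ U W'
      have h2 : finrank F V - (finrank F W' + finrank F U)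
          = finrank F (V ⧸ U) - finrank F W' := by rw [hquot]; omega
      rw [h1, h2]
    _ = x ^ finrank F (V ⧸ U) := sum_subspaces_prod x
    _ = x ^ (finrank F V - finrank F U) := by rw [hquot]

end SubspaceSums

lemma neg_one_pow_sub_eq {N c : ℕ} (h : c ≤ N) : (-1 : ℝ) ^ (N - c) = (-1) ^ N * (-1) ^ c := by
  have h1 : N - c + c = N := Nat.sub_add_cancel h
  calc (-1 : ℝ) ^ (N - c) = (-1) ^ (N - c) * ((-1) ^ c * (-1) ^ c) := by
        rw [← mul_pow]; norm_num
    _ = (-1) ^ (N - c + c) * (-1) ^ c := by rw [pow_add]; ring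
    _ = (-1) ^ N * (-1) ^ c := by rw [h1]


variable (F : Type*) [Field F] [Fintype F] (n : ℕ)

/-- The ground set of the matroid `PG(n-1, q)`: the points of the projective
space of dimension `n-1` over `F = 𝔽_q`, i.e. lines through the origin in `Fⁿ`. -/
abbrev PGPoint := Projectivization F (Fin n → F)

/-- The rank function of the matroid `PG(n-1, q)`: the rank of a set of
projective points is the dimension of their linear span. -/
noncomputable def pgRk [Fintype (PGPoint F n)] (A : Finset (PGPoint F n)) : ℕ :=
  Module.finrank F ↥(⨆ p ∈ A, Projectivization.submodule p)

/-- The rank function of the matroid dual to `PG(n-1, q)`. -/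
noncomputable def pgDualRk {F : Type*} [Field F] [Fintype F] (n : ℕ)
    [Fintype (PGPoint F n)] [DecidableEq (PGPoint F n)]
    (A : Finset (PGPoint F n)) : ℕ :=
  pgRk F n Aᶜ + A.card - pgRk F n univ

/-- The characteristic polynomial of the matroid dual to `PG(n-1, q)`:
`χ_{PG(n-1,q)*}(x) = ((-1)^{(qⁿ-1)/(q-1)} / xⁿ) ∑_{k=0}^{n} C(n,k)_q (1-x)^{(q^k-1)/(q-1)}
∏_{i=0}^{n-k-1} (x - qⁱ)`. -/
theorem charPoly_PG_dual {F : Type*} [Field F] [Fintype F] (n : ℕ)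
    [Fintype (PGPoint F n)] [DecidableEq (PGPoint F n)] (x : ℝ) (hx : x ≠ 0) :
    (∑ A : Finset (PGPoint F n),
        (-1 : ℝ) ^ A.card * x ^ (pgDualRk n (univ : Finset (PGPoint F n)) - pgDualRk n A)) =
      ((-1 : ℝ) ^ ((Fintype.card F ^ n - 1) / (Fintype.card F - 1)) / x ^ n) *
        ∑ k ∈ Finset.range (n + 1),
          (∏ i ∈ Finset.range k,
              ((Fintype.card F : ℝ) ^ (n - i) - 1) / ((Fintype.card F : ℝ) ^ (k - i) - 1)) *
            (1 - x) ^ ((Fintype.card F ^ k - 1) / (Fintype.card F - 1)) *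
            ∏ i ∈ Finset.range (n - k), (x - (Fintype.card F : ℝ) ^ i) := by
  classical
  have hq2 : 1 < Fintype.card F := Fintype.one_lt_card
  have hQ : (1 : ℝ) < (Fintype.card F : ℝ) := by exact_mod_cast hq2
  have hVr : finrank F (Fin n → F) = n := Module.finrank_fin_fun F
  haveI : Finite (Submodule F (Fin n → F)) := Finite.of_injective _ SetLike.coe_injective
  haveI : Fintype (Submodule F (Fin n → F)) := Fintype.ofFinite _
  set N := Fintype.card (PGPoint F n) with hNdef
  -- point counts
  have hpts : ∀ W : Submodule F (Fin n → F),
      (univ.filter (fun p : PGPoint F n => p.submodule ≤ W)).card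
        = (Fintype.card F ^ finrank F W - 1) / (Fintype.card F - 1) := by
    intro W
    have h := card_points_mul (F := F) (V := Fin n → F) W
    rw [Nat.card_eq_fintype_card, Fintype.card_subtype] at h
    exact (Nat.div_eq_of_eq_mul_left (by omega) h.symm).symm
  have hN : (Fintype.card F ^ n - 1) / (Fintype.card F - 1) = N := by
    have h := hpts ⊤
    rw [Finset.filter_true_of_mem (fun p _ => le_top), Finset.card_univ, finrank_top, hVr] at h
    exact h.symm
  -- rank facts
  have hrk_empty : pgRk F n (∅ : Finset (PGPoint F n)) = 0 := by
    unfold pgRk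
    simp
  have hsup_le : ∀ X Y : Submodule F (Fin n → F),
      finrank F (X ⊔ Y : Submodule F (Fin n → F)) ≤ finrank F X + finrank F Y := by
    intro X Y
    have := Submodule.finrank_sup_add_finrank_inf_eq X Y
    omega
  have hrk_le_card : ∀ B : Finset (PGPoint F n), pgRk F n B ≤ B.card := by
    intro B
    induction B using Finset.induction_on with
    | empty => rw [hrk_empty]; simp
    | @insert a B ha ih =>
      unfold pgRk at ih ⊢
      rw [Finset.iSup_insert]
      calc finrank F ↥(Projectivization.submodule a ⊔ ⨆ p ∈ B, Projectivization.submodule p)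
          ≤ finrank F (Projectivization.submodule a)
            + finrank F ↥(⨆ p ∈ B, Projectivization.submodule p) := hsup_le _ _
        _ ≤ 1 + B.card := by
            rw [Projectivization.finrank_submodule]
            omega
        _ = (insert a B).card := by rw [Finset.card_insert_of_notMem ha]; omega
  have hrk_le_n : ∀ B : Finset (PGPoint F n), pgRk F n B ≤ n := by
    intro B
    unfold pgRk
    calc finrank F ↥(⨆ p ∈ B, Projectivization.submodule p) ≤ finrank F (Fin n → F) :=
          Submodule.finrank_le _
      _ = n := hVr
  have hrk_univ : pgRk F n (univ : Finset (PGPoint F n)) = n := by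
    unfold pgRk
    have htop : (⨆ p ∈ (univ : Finset (PGPoint F n)), Projectivization.submodule p) = ⊤ := by
      rw [eq_top_iff]
      intro v _
      by_cases hv : v = (0 : Fin n → F)
      · rw [hv]; exact Submodule.zero_mem _
      · have hmem : v ∈ Projectivization.submodule (Projectivization.mk F v hv) := by
          rw [Projectivization.submodule_mk]
          exact Submodule.mem_span_singleton_self v
        exact le_iSup₂ (f := fun (p : PGPoint F n) (_ : p ∈ (univ : Finset (PGPoint F n))) =>
          Projectivization.submodule p) (Projectivization.mk F v hv)
          (Finset.mem_univ _) hmem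
    rw [htop, finrank_top, hVr]
  have hsubadd : ∀ A : Finset (PGPoint F n), n ≤ pgRk F n Aᶜ + A.card := by
    intro A
    have hun : (⨆ p ∈ (univ : Finset (PGPoint F n)), Projectivization.submodule p)
        = (⨆ p ∈ Aᶜ, Projectivization.submodule p) ⊔ ⨆ p ∈ A, Projectivization.submodule p := by
      have hu : Aᶜ ∪ A = (univ : Finset (PGPoint F n)) := by
        ext p
        simp only [Finset.mem_union, Finset.mem_compl, Finset.mem_univ, iff_true]
        exact (em (p ∈ A)).symm
      rw [← hu, Finset.iSup_union]
    have h1 : pgRk F n univ ≤ pgRk F n Aᶜ + pgRk F n A := by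
      unfold pgRk
      rw [hun]
      exact hsup_le _ _
    have h2 := hrk_le_card A
    omega
  -- exponent lemma
  have hexp : ∀ A : Finset (PGPoint F n),
      pgDualRk n (univ : Finset (PGPoint F n)) - pgDualRk n A = Aᶜ.card - pgRk F n Aᶜ := by
    intro A
    have hdru : pgDualRk n (univ : Finset (PGPoint F n)) = N - n := by
      unfold pgDualRk
      rw [Finset.compl_univ, hrk_empty, hrk_univ, Finset.card_univ]
      omega
    have hdra : pgDualRk n A = pgRk F n Aᶜ + A.card - n := by
      unfold pgDualRk
      rw [hrk_univ]
    have h1 := hsubadd A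
    have h2 := hrk_le_card Aᶜ
    have h3 : Aᶜ.card = N - A.card := Finset.card_compl A
    have h4 : A.card ≤ N := Finset.card_le_univ A
    have h5 : n ≤ N := by
      have := hrk_le_card (univ : Finset (PGPoint F n))
      rw [hrk_univ, Finset.card_univ] at this
      omega
    omega
  -- interval lemma specialization
  have hint : ∀ B : Finset (PGPoint F n), x ^ (n - pgRk F n B) =
      ∑ W ∈ univ.filter (fun W : Submodule F (Fin n → F) =>
          (⨆ p ∈ B, Projectivization.submodule p) ≤ W),
        ∏ i ∈ range (n - finrank F W), (x - (Fintype.card F : ℝ) ^ i) := by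
    intro B
    have h := (sum_interval_prod (U := ⨆ p ∈ B, Projectivization.submodule p) x).symm
    rw [hVr] at h
    exact h
  -- core combinatorial identity
  have core : ∑ B : Finset (PGPoint F n), (-x) ^ B.card * x ^ (n - pgRk F n B)
      = ∑ k ∈ Finset.range (n + 1),
          (∏ i ∈ Finset.range k,
              ((Fintype.card F : ℝ) ^ (n - i) - 1) / ((Fintype.card F : ℝ) ^ (k - i) - 1)) *
            (1 - x) ^ ((Fintype.card F ^ k - 1) / (Fintype.card F - 1)) *
            ∏ i ∈ Finset.range (n - k), (x - (Fintype.card F : ℝ) ^ i) := by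
    calc ∑ B : Finset (PGPoint F n), (-x) ^ B.card * x ^ (n - pgRk F n B)
        = ∑ B : Finset (PGPoint F n), ∑ W : Submodule F (Fin n → F),
            if (⨆ p ∈ B, Projectivization.submodule p) ≤ W then
              (-x) ^ B.card * ∏ i ∈ range (n - finrank F W), (x - (Fintype.card F : ℝ) ^ i)
            else 0 := by
          refine Finset.sum_congr rfl fun B _ => ?_
          rw [hint B, Finset.mul_sum, Finset.sum_filter]
      _ = ∑ W : Submodule F (Fin n → F), ∑ B : Finset (PGPoint F n),
            if (⨆ p ∈ B, Projectivization.submodule p) ≤ W then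
              (-x) ^ B.card * ∏ i ∈ range (n - finrank F W), (x - (Fintype.card F : ℝ) ^ i)
            else 0 := Finset.sum_comm
      _ = ∑ W : Submodule F (Fin n → F),
            (1 - x) ^ ((Fintype.card F ^ finrank F W - 1) / (Fintype.card F - 1)) *
              ∏ i ∈ range (n - finrank F W), (x - (Fintype.card F : ℝ) ^ i) := by
          refine Finset.sum_congr rfl fun W _ => ?_
          rw [← Finset.sum_filter, ← Finset.sum_mul]
          congr 1
          have hfilt : univ.filter (fun B : Finset (PGPoint F n) =>
              (⨆ p ∈ B, Projectivization.submodule p) ≤ W)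
              = (univ.filter (fun p : PGPoint F n => p.submodule ≤ W)).powerset := by
            ext B
            simp [Finset.subset_iff, iSup_le_iff]
          rw [hfilt, ← hpts W]
          set S := univ.filter (fun p : PGPoint F n => p.submodule ≤ W)
          calc ∑ B ∈ S.powerset, (-x) ^ B.card
              = ∑ B ∈ S.powerset, (∏ _p ∈ B, (-x)) * ∏ _p ∈ S \ B, (1 : ℝ) := by
                refine Finset.sum_congr rfl fun B _ => ?_
                rw [Finset.prod_const, Finset.prod_const_one, mul_one]
            _ = ∏ _p ∈ S, ((-x) + 1) := (Finset.prod_add _ _ S).symm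
            _ = (1 - x) ^ S.card := by rw [Finset.prod_const]; congr 1; ring
      _ = ∑ k ∈ Finset.range (n + 1), ∑ W ∈ univ.filter
            (fun W : Submodule F (Fin n → F) => finrank F W = k),
            (1 - x) ^ ((Fintype.card F ^ finrank F W - 1) / (Fintype.card F - 1)) *
              ∏ i ∈ range (n - finrank F W), (x - (Fintype.card F : ℝ) ^ i) := by
          rw [Finset.sum_fiberwise_of_maps_to (fun W _ => Finset.mem_range.mpr
            (by have := Submodule.finrank_le W; omega))]
      _ = ∑ k ∈ Finset.range (n + 1),
            (∏ i ∈ Finset.range k,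
              ((Fintype.card F : ℝ) ^ (n - i) - 1) / ((Fintype.card F : ℝ) ^ (k - i) - 1)) *
            (1 - x) ^ ((Fintype.card F ^ k - 1) / (Fintype.card F - 1)) *
            ∏ i ∈ Finset.range (n - k), (x - (Fintype.card F : ℝ) ^ i) := by
          refine Finset.sum_congr rfl fun k hk => ?_
          have hk' : k ≤ n := by simp at hk; omega
          have hterm : ∀ W ∈ univ.filter
              (fun W : Submodule F (Fin n → F) => finrank F W = k),
              (1 - x) ^ ((Fintype.card F ^ finrank F W - 1) / (Fintype.card F - 1)) *
                ∏ i ∈ range (n - finrank F W), (x - (Fintype.card F : ℝ) ^ i)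
              = (1 - x) ^ ((Fintype.card F ^ k - 1) / (Fintype.card F - 1)) *
                ∏ i ∈ range (n - k), (x - (Fintype.card F : ℝ) ^ i) := by
            intro W hW
            simp only [Finset.mem_filter] at hW
            rw [hW.2]
          rw [Finset.sum_congr rfl hterm, Finset.sum_const, nsmul_eq_mul]
          have hcount : ((univ.filter
              (fun W : Submodule F (Fin n → F) => finrank F W = k)).card : ℝ)
              = gbinom (Fintype.card F) n k := by
            have h1 : (univ.filter (fun W : Submodule F (Fin n → F) => finrank F W = k)).card
                = Nat.card {W : Submodule F (Fin n → F) // finrank F W = k} := by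
              rw [Nat.card_eq_fintype_card, Fintype.card_subtype]
            rw [h1, cast_card_subspaces hVr k hk']
          rw [hcount]
          rw [show gbinom (Fintype.card F) n k = ∏ i ∈ Finset.range k,
            ((Fintype.card F : ℝ) ^ (n - i) - 1) / ((Fintype.card F : ℝ) ^ (k - i) - 1) from rfl]
          ring
  -- key identity
  have key : (∑ B : Finset (PGPoint F n), (-1 : ℝ) ^ Bᶜ.card * x ^ (B.card - pgRk F n B)) * x ^ n
      = (-1 : ℝ) ^ N * ∑ k ∈ Finset.range (n + 1),
          (∏ i ∈ Finset.range k,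
              ((Fintype.card F : ℝ) ^ (n - i) - 1) / ((Fintype.card F : ℝ) ^ (k - i) - 1)) *
            (1 - x) ^ ((Fintype.card F ^ k - 1) / (Fintype.card F - 1)) *
            ∏ i ∈ Finset.range (n - k), (x - (Fintype.card F : ℝ) ^ i) := by
    rw [Finset.sum_mul]
    have hterm : ∀ B : Finset (PGPoint F n),
        (-1 : ℝ) ^ Bᶜ.card * x ^ (B.card - pgRk F n B) * x ^ n
        = (-1 : ℝ) ^ N * ((-x) ^ B.card * x ^ (n - pgRk F n B)) := by
      intro B
      have h1 : Bᶜ.card = N - B.card := Finset.card_compl B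
      have hc : B.card ≤ N := Finset.card_le_univ B
      have hsign := neg_one_pow_sub_eq (N := N) (c := B.card) hc
      have hrkc := hrk_le_card B
      have hrkn := hrk_le_n B
      have hxp : x ^ (B.card - pgRk F n B) * x ^ n = x ^ B.card * x ^ (n - pgRk F n B) := by
        rw [← pow_add, ← pow_add]
        congr 1
        omega
      calc (-1 : ℝ) ^ Bᶜ.card * x ^ (B.card - pgRk F n B) * x ^ n
          = (-1 : ℝ) ^ (N - B.card) * (x ^ (B.card - pgRk F n B) * x ^ n) := by
            rw [h1]; ring
        _ = (-1 : ℝ) ^ N * (-1 : ℝ) ^ B.card * (x ^ B.card * x ^ (n - pgRk F n B)) := by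
            rw [hsign, hxp]
        _ = (-1 : ℝ) ^ N * ((-x) ^ B.card * x ^ (n - pgRk F n B)) := by
            rw [neg_pow]; ring
    rw [Finset.sum_congr rfl (fun B _ => hterm B), ← Finset.mul_sum, core]
  -- conclusion
  have hLHS : (∑ A : Finset (PGPoint F n),
      (-1 : ℝ) ^ A.card * x ^ (pgDualRk n (univ : Finset (PGPoint F n)) - pgDualRk n A))
      = ∑ B : Finset (PGPoint F n), (-1 : ℝ) ^ Bᶜ.card * x ^ (B.card - pgRk F n B) := by
    refine Fintype.sum_bijective compl
      (Function.Involutive.bijective (fun A => compl_compl A)) _ _ (fun A => ?_)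
    rw [hexp A, compl_compl]
  rw [hLHS, hN, div_mul_eq_mul_div, eq_div_iff (pow_ne_zero n hx)]
  exact key
end
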